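/- arXiv:1011.6195 — 5 statements merged into one kernel-verified Lean document; each statement's English description precedes it below -/
import Mathlib

section
/- Let F(q,u) = qu(1-q)²/((1-2q)(1-q-qu)) and G(q,u) = -q(1-q-u+qu-q²u)/((1-2q)(1-q-qu)). For all complex q, u with |q| < 1/10 and |u| ≤ 1, the series W(q,u) := ∑_{m=0}^∞ F(q,q^m u) ∏_{k=0}^{m-1} G(q,q^k u) converges absolutely and satisfies the functional equation W(q,u) = F(q,u) + G(q,u)·W(q,qu). Moreover W is the unique bounded function on {(q,u) : |q| < 1/10, |u| ≤ 1} satisfying this functional equation together with W(q,0) = 0 for all |q| < 1/10. -/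
open Complex Filter Topology

noncomputable section

def Ffun (q u : ℂ) : ℂ := q * u * (1 - q) ^ 2 / ((1 - 2 * q) * (1 - q - q * u))

def Gfun (q u : ℂ) : ℂ :=
  -q * (1 - q - u + q * u - q ^ 2 * u) / ((1 - 2 * q) * (1 - q - q * u))

/-- `W(q,u) = ∑_{m=0}^∞ F(q,q^m u) ∏_{k=0}^{m-1} G(q,q^k u)` -/
def Wfun (q u : ℂ) : ℂ :=
  ∑' m : ℕ, Ffun q (q ^ m * u) * ∏ k ∈ Finset.range m, Gfun q (q ^ k * u)

lemma den_bound {q u : ℂ} (hq : ‖q‖ < 1 / 10) (hu : ‖u‖ ≤ 1) :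
    (16 : ℝ) / 25 ≤ ‖(1 - 2 * q) * (1 - q - q * u)‖ := by
  rw [norm_mul]
  have h1 : (4 : ℝ) / 5 ≤ ‖1 - 2 * q‖ := by
    have h := norm_sub_norm_le (1 : ℂ) (2 * q)
    rw [norm_mul, norm_one] at h
    have h2 : ‖(2 : ℂ)‖ = 2 := by simp
    rw [h2] at h
    nlinarith [norm_nonneg q]
  have h2 : (4 : ℝ) / 5 ≤ ‖1 - q - q * u‖ := by
    have he : (1 : ℂ) - q - q * u = 1 - (q + q * u) := by ring
    rw [he]
    have h := norm_sub_norm_le (1 : ℂ) (q + q * u)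
    rw [norm_one] at h
    have hqu : ‖q + q * u‖ ≤ ‖q‖ + ‖q‖ * ‖u‖ := by
      calc ‖q + q * u‖ ≤ ‖q‖ + ‖q * u‖ := norm_add_le _ _
        _ = ‖q‖ + ‖q‖ * ‖u‖ := by rw [norm_mul]
    nlinarith [norm_nonneg q, norm_nonneg u]
  nlinarith [norm_nonneg (1 - 2 * q), norm_nonneg (1 - q - q * u)]

lemma F_bound {q u : ℂ} (hq : ‖q‖ < 1 / 10) (hu : ‖u‖ ≤ 1) :
    ‖Ffun q u‖ ≤ 2 * ‖q‖ := by
  unfold Ffun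
  rw [norm_div]
  have hd := den_bound hq hu
  have hnum : ‖q * u * (1 - q) ^ 2‖ ≤ ‖q‖ * (121 / 100) := by
    rw [norm_mul, norm_mul, norm_pow]
    have h1 : ‖(1 : ℂ) - q‖ ≤ 11 / 10 := by
      calc ‖(1 : ℂ) - q‖ ≤ ‖(1 : ℂ)‖ + ‖q‖ := norm_sub_le _ _
        _ ≤ 11 / 10 := by rw [norm_one]; linarith
    have hsq : ‖(1 : ℂ) - q‖ ^ 2 ≤ 121 / 100 := by
      nlinarith [norm_nonneg ((1 : ℂ) - q)]
    nlinarith [norm_nonneg q, norm_nonneg u, sq_nonneg ‖(1 : ℂ) - q‖,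
      mul_le_mul_of_nonneg_left hsq (norm_nonneg q),
      mul_le_mul_of_nonneg_right hu (mul_nonneg (norm_nonneg q)
        (sq_nonneg ‖(1 : ℂ) - q‖))]
  have hdpos : (0 : ℝ) < ‖(1 - 2 * q) * (1 - q - q * u)‖ := by linarith
  rw [div_le_iff₀ hdpos]
  nlinarith [norm_nonneg q, mul_le_mul_of_nonneg_left hd (by positivity : (0:ℝ) ≤ 2 * ‖q‖)]

lemma G_bound {q u : ℂ} (hq : ‖q‖ < 1 / 10) (hu : ‖u‖ ≤ 1) :
    ‖Gfun q u‖ ≤ 1 / 2 := by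
  unfold Gfun
  rw [norm_div]
  have hd := den_bound hq hu
  have hnum : ‖-q * (1 - q - u + q * u - q ^ 2 * u)‖ ≤ ‖q‖ * (221 / 100) := by
    rw [norm_mul, norm_neg]
    have hin : ‖(1 : ℂ) - q - u + q * u - q ^ 2 * u‖ ≤ 221 / 100 := by
      have h1 : ‖(1 : ℂ) - q - u + q * u - q ^ 2 * u‖ ≤
          ‖(1 : ℂ) - q - u + q * u‖ + ‖q ^ 2 * u‖ := norm_sub_le _ _
      have h2 : ‖(1 : ℂ) - q - u + q * u‖ ≤ ‖(1 : ℂ) - q - u‖ + ‖q * u‖ := norm_add_le _ _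
      have h3 : ‖(1 : ℂ) - q - u‖ ≤ ‖(1 : ℂ) - q‖ + ‖u‖ := norm_sub_le _ _
      have h4 : ‖(1 : ℂ) - q‖ ≤ ‖(1 : ℂ)‖ + ‖q‖ := norm_sub_le _ _
      rw [norm_one] at h4
      have h5 : ‖q * u‖ ≤ ‖q‖ := by
        rw [norm_mul]
        nlinarith [norm_nonneg q, norm_nonneg u]
      have h6 : ‖q ^ 2 * u‖ ≤ ‖q‖ ^ 2 := by
        rw [norm_mul, norm_pow]
        nlinarith [norm_nonneg q, norm_nonneg u, pow_nonneg (norm_nonneg q) 2]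
      nlinarith [norm_nonneg q]
    nlinarith [norm_nonneg q, norm_nonneg ((1 : ℂ) - q - u + q * u - q ^ 2 * u)]
  have hdpos : (0 : ℝ) < ‖(1 - 2 * q) * (1 - q - q * u)‖ := by linarith
  rw [div_le_iff₀ hdpos]
  nlinarith [norm_nonneg q]

lemma pow_mul_norm_le {q u : ℂ} (hq : ‖q‖ < 1 / 10) (hu : ‖u‖ ≤ 1) (m : ℕ) :
    ‖q ^ m * u‖ ≤ 1 := by
  rw [norm_mul, norm_pow]
  have h1 : ‖q‖ ^ m ≤ 1 := pow_le_one₀ (norm_nonneg q) (by linarith)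
  nlinarith [pow_nonneg (norm_nonneg q) m, norm_nonneg u]

lemma term_bound {q u : ℂ} (hq : ‖q‖ < 1 / 10) (hu : ‖u‖ ≤ 1) (m : ℕ) :
    ‖Ffun q (q ^ m * u) * ∏ k ∈ Finset.range m, Gfun q (q ^ k * u)‖ ≤
      (2 * ‖q‖) * (1 / 2) ^ m := by
  rw [norm_mul]
  have hF := F_bound hq (pow_mul_norm_le hq hu m)
  have hP : ‖∏ k ∈ Finset.range m, Gfun q (q ^ k * u)‖ ≤ (1 / 2) ^ m := by
    rw [norm_prod]
    calc ∏ k ∈ Finset.range m, ‖Gfun q (q ^ k * u)‖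
        ≤ ∏ _k ∈ Finset.range m, (1 / 2 : ℝ) :=
          Finset.prod_le_prod (fun k _ => norm_nonneg _)
            (fun k _ => G_bound hq (pow_mul_norm_le hq hu k))
      _ = (1 / 2) ^ m := by simp
  exact mul_le_mul hF hP (norm_nonneg _) (by positivity)

lemma geom_summable (q : ℂ) :
    Summable (fun m : ℕ => (2 * ‖q‖) * (1 / 2 : ℝ) ^ m) :=
  (summable_geometric_of_lt_one (by norm_num) (by norm_num)).mul_left _

lemma W_summable_norm {q u : ℂ} (hq : ‖q‖ < 1 / 10) (hu : ‖u‖ ≤ 1) :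
    Summable (fun m : ℕ =>
      ‖Ffun q (q ^ m * u) * ∏ k ∈ Finset.range m, Gfun q (q ^ k * u)‖) :=
  Summable.of_nonneg_of_le (fun m => norm_nonneg _) (term_bound hq hu) (geom_summable q)

lemma W_summable {q u : ℂ} (hq : ‖q‖ < 1 / 10) (hu : ‖u‖ ≤ 1) :
    Summable (fun m : ℕ =>
      Ffun q (q ^ m * u) * ∏ k ∈ Finset.range m, Gfun q (q ^ k * u)) :=
  Summable.of_norm (W_summable_norm hq hu)

lemma W_bound {q u : ℂ} (hq : ‖q‖ < 1 / 10) (hu : ‖u‖ ≤ 1) : ‖Wfun q u‖ ≤ 1 := by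
  have hsn := W_summable_norm hq hu
  have h1 : ‖Wfun q u‖ ≤ ∑' m : ℕ,
      ‖Ffun q (q ^ m * u) * ∏ k ∈ Finset.range m, Gfun q (q ^ k * u)‖ :=
    norm_tsum_le_tsum_norm hsn
  have h2 : (∑' m : ℕ,
      ‖Ffun q (q ^ m * u) * ∏ k ∈ Finset.range m, Gfun q (q ^ k * u)‖) ≤
      ∑' m : ℕ, (2 * ‖q‖) * (1 / 2 : ℝ) ^ m :=
    Summable.tsum_le_tsum (term_bound hq hu) hsn (geom_summable q)
  have h3 : (∑' m : ℕ, (2 * ‖q‖) * (1 / 2 : ℝ) ^ m) = (2 * ‖q‖) * 2 := by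
    rw [tsum_mul_left, tsum_geometric_of_lt_one (by norm_num) (by norm_num)]
    norm_num
  have hqn := norm_nonneg q
  linarith

lemma W_fe {q u : ℂ} (hq : ‖q‖ < 1 / 10) (hu : ‖u‖ ≤ 1) :
    Wfun q u = Ffun q u + Gfun q u * Wfun q (q * u) := by
  have hsum := W_summable hq hu
  have hterm : ∀ m : ℕ,
      Ffun q (q ^ (m + 1) * u) * ∏ k ∈ Finset.range (m + 1), Gfun q (q ^ k * u)
      = Gfun q u * (Ffun q (q ^ m * (q * u)) *
          ∏ k ∈ Finset.range m, Gfun q (q ^ k * (q * u))) := by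
    intro m
    rw [Finset.prod_range_succ']
    have h1 : ∀ k : ℕ, q ^ (k + 1) * u = q ^ k * (q * u) := fun k => by ring
    simp only [h1, pow_zero, one_mul]
    ring
  have h0 : Wfun q u = Ffun q (q ^ 0 * u) * ∏ k ∈ Finset.range 0, Gfun q (q ^ k * u) +
      ∑' m : ℕ, Ffun q (q ^ (m + 1) * u) * ∏ k ∈ Finset.range (m + 1), Gfun q (q ^ k * u) :=
    Summable.tsum_eq_zero_add hsum
  rw [h0]
  simp only [pow_zero, one_mul, Finset.range_zero, Finset.prod_empty, mul_one]
  congr 1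
  rw [tsum_congr hterm, tsum_mul_left]
  rfl

/-- For `|q| < 1/10`, `|u| ≤ 1`, the series defining `W(q,u)` converges absolutely and
`W` satisfies `W(q,u) = F(q,u) + G(q,u) W(q,qu)`; moreover `W` is the unique bounded
solution of this functional equation with `W(q,0) = 0`. -/
theorem prudent_W_functional_equation :
    (∀ q u : ℂ, ‖q‖ < 1 / 10 → ‖u‖ ≤ 1 →
      Summable (fun m : ℕ =>
        ‖Ffun q (q ^ m * u) * ∏ k ∈ Finset.range m, Gfun q (q ^ k * u)‖) ∧
      Wfun q u = Ffun q u + Gfun q u * Wfun q (q * u)) ∧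
    (∀ W' : ℂ → ℂ → ℂ,
      (∃ M : ℝ, ∀ q u : ℂ, ‖q‖ < 1 / 10 → ‖u‖ ≤ 1 → ‖W' q u‖ ≤ M) →
      (∀ q u : ℂ, ‖q‖ < 1 / 10 → ‖u‖ ≤ 1 →
        W' q u = Ffun q u + Gfun q u * W' q (q * u)) →
      (∀ q : ℂ, ‖q‖ < 1 / 10 → W' q 0 = 0) →
      ∀ q u : ℂ, ‖q‖ < 1 / 10 → ‖u‖ ≤ 1 → W' q u = Wfun q u) := by
  constructor
  · intro q u hq hu
    exact ⟨W_summable_norm hq hu, W_fe hq hu⟩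
  · rintro W' ⟨M, hM⟩ hfe _hzero q u hq hu
    have key : ∀ n : ℕ, ∀ v : ℂ, ‖v‖ ≤ 1 →
        ‖W' q v - Wfun q v‖ ≤ (1 / 2 : ℝ) ^ n * (M + 1) := by
      intro n
      induction n with
      | zero =>
        intro v hv
        simp only [pow_zero, one_mul]
        calc ‖W' q v - Wfun q v‖ ≤ ‖W' q v‖ + ‖Wfun q v‖ := norm_sub_le _ _
          _ ≤ M + 1 := add_le_add (hM q v hq hv) (W_bound hq hv)
      | succ n ih =>
        intro v hv
        have hqv : ‖q * v‖ ≤ 1 := by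
          rw [norm_mul]
          nlinarith [norm_nonneg q, norm_nonneg v]
        have hsub : W' q v - Wfun q v = Gfun q v * (W' q (q * v) - Wfun q (q * v)) := by
          rw [hfe q v hq hv, W_fe hq hv]
          ring
        rw [hsub, norm_mul]
        calc ‖Gfun q v‖ * ‖W' q (q * v) - Wfun q (q * v)‖
            ≤ (1 / 2) * ((1 / 2 : ℝ) ^ n * (M + 1)) := by
              have hM0 : (0 : ℝ) ≤ M := le_trans (norm_nonneg _) (hM q 0 hq (by simp))
              have hMnn : (0 : ℝ) ≤ (1 / 2 : ℝ) ^ n * (M + 1) := by positivity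
              exact mul_le_mul (G_bound hq hv) (ih (q * v) hqv) (norm_nonneg _) (by norm_num)
          _ = (1 / 2 : ℝ) ^ (n + 1) * (M + 1) := by ring
    have hten : Tendsto (fun n : ℕ => (1 / 2 : ℝ) ^ n * (M + 1)) atTop (𝓝 0) := by
      have := (tendsto_pow_atTop_nhds_zero_of_lt_one (by norm_num : (0:ℝ) ≤ 1/2)
        (by norm_num : (1/2:ℝ) < 1)).mul_const (M + 1)
      simpa using this
    have h0 : ‖W' q u - Wfun q u‖ ≤ 0 :=
      ge_of_tendsto' hten (fun n => key n u hu)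
    have := le_antisymm h0 (norm_nonneg _)
    rw [norm_eq_zero, sub_eq_zero] at this
    exact this
end
end

section
/- For every integer k ≥ 1 the polynomial 1 - 2x + x^{k+2} has exactly one root z̄_k in the open interval (0,1); this root satisfies 1/2 < z̄_k ≤ (√5 - 1)/2, with z̄_1 = (√5 - 1)/2, and z̄_k → 1/2 as k → ∞; moreover 0 < z̄_k - 1/2 ≤ (1/2)·z̄_1^{k+2}, so the convergence is geometrically fast. -/
open Filter Topology

noncomputable def zbrP (k : ℕ) (x : ℝ) : ℝ := 1 - ∑ i ∈ Finset.range (k+1), x^(i+1)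

lemma zbr_factor (k : ℕ) (x : ℝ) :
    (1 - x) * zbrP k x = 1 - 2*x + x^(k+2) := by
  have h := geom_sum_mul x (k+1)
  have hs : ∑ i ∈ Finset.range (k+1), x^(i+1)
      = x * ∑ i ∈ Finset.range (k+1), x^i := by
    rw [Finset.mul_sum]; exact Finset.sum_congr rfl fun i _ => by ring
  unfold zbrP
  rw [hs]
  linear_combination x * h

lemma zbrP_anti (k : ℕ) : StrictAntiOn (zbrP k) (Set.Ici 0) := by
  intro a ha b hb hab
  unfold zbrP
  have : ∑ i ∈ Finset.range (k+1), a^(i+1) < ∑ i ∈ Finset.range (k+1), b^(i+1) := by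
    apply Finset.sum_lt_sum_of_nonempty (by simp)
    intro i _
    exact pow_lt_pow_left₀ hab ha (Nat.succ_ne_zero i)
  linarith

lemma zbrP_cont (k : ℕ) : Continuous (zbrP k) := by
  unfold zbrP; fun_prop

lemma zbr_root_iff (k : ℕ) {x : ℝ} (hx : x ∈ Set.Ioo (0:ℝ) 1) :
    1 - 2*x + x^(k+2) = 0 ↔ zbrP k x = 0 := by
  rw [← zbr_factor]
  have : (1:ℝ) - x ≠ 0 := by have := hx.2; intro h; linarith
  constructor
  · intro h; exact (mul_eq_zero.1 h).resolve_left this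
  · intro h; rw [h, mul_zero]

lemma zbrP_half_pos (k : ℕ) : 0 < zbrP k (1/2) := by
  have h := zbr_factor k (1/2)
  have h2 : (0:ℝ) < (1/2:ℝ)^(k+2) := by positivity
  nlinarith [h, h2]

lemma zbrP_one (k : ℕ) : zbrP k 1 = -k := by
  unfold zbrP; simp

noncomputable def phib : ℝ := (Real.sqrt 5 - 1) / 2

lemma sqrt5_gt : (2:ℝ) < Real.sqrt 5 := by
  nlinarith [Real.sq_sqrt (by norm_num : (5:ℝ) ≥ 0), Real.sqrt_nonneg 5]

lemma sqrt5_lt : Real.sqrt 5 < 3 := by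
  nlinarith [Real.sq_sqrt (by norm_num : (5:ℝ) ≥ 0), Real.sqrt_nonneg 5]

lemma phib_mem : phib ∈ Set.Ioo (0:ℝ) 1 := by
  constructor <;> unfold phib <;> [linarith [sqrt5_gt]; linarith [sqrt5_lt]]

lemma phib_sq : phib^2 = 1 - phib := by
  unfold phib
  have := Real.sq_sqrt (by norm_num : (5:ℝ) ≥ 0)
  nlinarith [this]

lemma zbrP_phib_nonpos (k : ℕ) (hk : 1 ≤ k) : zbrP k phib ≤ 0 := by
  unfold zbrP
  have hsub : Finset.range 2 ⊆ Finset.range (k+1) := by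
    apply Finset.range_subset_range.2; omega
  have hle : ∑ i ∈ Finset.range 2, phib^(i+1) ≤ ∑ i ∈ Finset.range (k+1), phib^(i+1) := by
    apply Finset.sum_le_sum_of_subset_of_nonneg hsub
    intro i _ _
    have := phib_mem.1
    positivity
  have h2 : ∑ i ∈ Finset.range 2, phib^(i+1) = phib + phib^2 := by
    simp [Finset.sum_range_succ]
  rw [h2] at hle
  have := phib_sq
  linarith

lemma zbr_exu (k : ℕ) (hk : 1 ≤ k) :
    ∃! x : ℝ, x ∈ Set.Ioo (0 : ℝ) 1 ∧ 1 - 2 * x + x ^ (k + 2) = 0 := by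
  have hcont : ContinuousOn (zbrP k) (Set.Icc (1/2 : ℝ) 1) := (zbrP_cont k).continuousOn
  have hmem : (0:ℝ) ∈ Set.Ioo (zbrP k 1) (zbrP k (1/2)) := by
    refine ⟨?_, zbrP_half_pos k⟩
    rw [zbrP_one]
    have : (1:ℝ) ≤ k := by exact_mod_cast hk
    linarith
  obtain ⟨x, hx, hpx⟩ := intermediate_value_Ioo' (by norm_num : (1/2:ℝ) ≤ 1) hcont hmem
  have hx01 : x ∈ Set.Ioo (0:ℝ) 1 := ⟨by linarith [hx.1], hx.2⟩
  refine ⟨x, ⟨hx01, (zbr_root_iff k hx01).2 hpx⟩, ?_⟩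
  intro y hy
  have hyp : zbrP k y = 0 := (zbr_root_iff k hy.1).1 hy.2
  exact (zbrP_anti k).injOn (Set.mem_Ici.2 hy.1.1.le) (Set.mem_Ici.2 hx01.1.le)
    (by rw [hyp, hpx])

/-- For each `k ≥ 1`, the polynomial `1 - 2x + x^{k+2}` has a unique root `z̄_k` in
`(0,1)`; it satisfies `1/2 < z̄_k ≤ (√5-1)/2`, with `z̄_1 = (√5-1)/2`, `z̄_k → 1/2`,
and `0 < z̄_k - 1/2 ≤ (1/2) z̄_1^{k+2}`. -/
theorem zbar_roots_properties :
    (∀ k : ℕ, 1 ≤ k →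
      ∃! x : ℝ, x ∈ Set.Ioo (0 : ℝ) 1 ∧ 1 - 2 * x + x ^ (k + 2) = 0) ∧
    ∀ zbar : ℕ → ℝ,
      (∀ k : ℕ, 1 ≤ k → zbar k ∈ Set.Ioo (0 : ℝ) 1 ∧
        1 - 2 * zbar k + zbar k ^ (k + 2) = 0) →
      zbar 1 = (Real.sqrt 5 - 1) / 2 ∧
      (∀ k : ℕ, 1 ≤ k →
        1 / 2 < zbar k ∧ zbar k ≤ (Real.sqrt 5 - 1) / 2 ∧
        0 < zbar k - 1 / 2 ∧
        zbar k - 1 / 2 ≤ (1 / 2) * ((Real.sqrt 5 - 1) / 2) ^ (k + 2)) ∧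
      Tendsto zbar atTop (𝓝 (1 / 2)) := by
  refine ⟨zbr_exu, ?_⟩
  intro zbar hz
  -- main bounds
  have hmain : ∀ k : ℕ, 1 ≤ k →
      1 / 2 < zbar k ∧ zbar k ≤ phib ∧
      0 < zbar k - 1 / 2 ∧ zbar k - 1 / 2 ≤ (1 / 2) * phib ^ (k + 2) := by
    intro k hk
    obtain ⟨hmem, hroot⟩ := hz k hk
    have hp : zbrP k (zbar k) = 0 := (zbr_root_iff k hmem).1 hroot
    have h1 : 1/2 < zbar k := by
      have := ((zbrP_anti k).lt_iff_gt (Set.mem_Ici.2 hmem.1.le)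
        (Set.mem_Ici.2 (by norm_num : (0:ℝ) ≤ 1/2))).1
        (by rw [hp]; exact zbrP_half_pos k)
      exact this
    have h2 : zbar k ≤ phib := by
      have := ((zbrP_anti k).le_iff_ge (Set.mem_Ici.2 phib_mem.1.le)
        (Set.mem_Ici.2 hmem.1.le)).1
        (by rw [hp]; exact zbrP_phib_nonpos k hk)
      exact this
    have h4 : zbar k - 1/2 ≤ (1/2) * phib ^ (k+2) := by
      have hpow : zbar k ^ (k+2) ≤ phib ^ (k+2) := pow_le_pow_left₀ hmem.1.le h2 _
      linarith [hroot, hpow]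
    exact ⟨h1, h2, by linarith, h4⟩
  refine ⟨?_, ?_, ?_⟩
  · -- zbar 1 = phib
    obtain ⟨hmem, hroot⟩ := hz 1 le_rfl
    have hphi_root : 1 - 2 * phib + phib ^ (1+2) = 0 := by
      have h := phib_sq
      have : phib ^ (1+2) = phib^3 := by norm_num
      rw [this]
      linear_combination (phib - 1) * h
    have := (zbr_exu 1 le_rfl).unique ⟨hmem, hroot⟩ ⟨phib_mem, hphi_root⟩
    exact this
  · intro k hk
    obtain ⟨a, b, c, d⟩ := hmain k hk
    exact ⟨a, b, c, d⟩
  · -- tendsto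
    have hphi0 : (0:ℝ) ≤ phib := phib_mem.1.le
    have hphi1 : phib < 1 := phib_mem.2
    have hpow : Tendsto (fun k : ℕ => phib ^ (k+2)) atTop (𝓝 0) := by
      have := tendsto_pow_atTop_nhds_zero_of_lt_one hphi0 hphi1
      exact this.comp (tendsto_add_atTop_nat 2)
    have hupper : Tendsto (fun k : ℕ => 1/2 + (1/2) * phib ^ (k+2)) atTop (𝓝 (1/2)) := by
      have : Tendsto (fun k : ℕ => (1/2 : ℝ) * phib ^ (k+2)) atTop (𝓝 0) := by
        simpa using hpow.const_mul (1/2 : ℝ)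
      simpa using (tendsto_const_nhds (x := (1/2:ℝ)) (f := atTop)).add this
    apply tendsto_of_tendsto_of_tendsto_of_le_of_le'
      (tendsto_const_nhds (x := (1/2:ℝ))) hupper
    · filter_upwards [eventually_ge_atTop 1] with k hk
      exact (hmain k hk).1.le
    · filter_upwards [eventually_ge_atTop 1] with k hk
      linarith [(hmain k hk).2.2.2]
end

section
/- Let a, q ∈ ℂ satisfy |a| < 1 and |q - 1/2| < 1/10. Then the function h(z) = (az;q)_∞/(z;q)_∞ is analytic in z on the open unit disc, and for every integer ν ≥ 1 its ν-th Taylor coefficient at z = 0 equals (1/(q;q)_∞) · ∑_{j=0}^∞ ( (a q^{-j};q)_∞ / (q^{-j};q)_j ) · q^{jν}, the series on the right being absolutely convergent. -/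
open Complex Filter Topology

noncomputable section

/-- finite q-Pochhammer symbol `(x;q)_n` -/
def qPF (x q : ℂ) (n : ℕ) : ℂ := ∏ i ∈ Finset.range n, (1 - x * q ^ i)

/-- infinite q-Pochhammer symbol `(x;q)_∞` -/
def qPI (x q : ℂ) : ℂ := ∏' i : ℕ, (1 - x * q ^ i)

private lemma one_sub_ne_zero' {w : ℂ} (h : ‖w‖ ≠ 1) : (1 : ℂ) - w ≠ 0 := by
  intro h0
  rw [sub_eq_zero] at h0
  apply h
  rw [← h0]
  simp

private lemma one_sub_ne_zero {w : ℂ} (h : ‖w‖ < 1) : (1 : ℂ) - w ≠ 0 :=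
  one_sub_ne_zero' (ne_of_lt h)

private lemma geom_sum_le_inv {r : ℝ} (h0 : 0 ≤ r) (h1 : r < 1) (n : ℕ) :
    ∑ i ∈ Finset.range n, r ^ i ≤ (1 - r)⁻¹ := by
  have := Summable.sum_le_tsum (Finset.range n) (fun i _ => pow_nonneg h0 i)
    (summable_geometric_of_lt_one h0 h1)
  rwa [tsum_geometric_of_lt_one h0 h1] at this

private lemma exp_neg_le_one_sub {r t : ℝ} (h0 : 0 ≤ t) (htr : t ≤ r) (hr : r < 1) :
    Real.exp (-((1 - r)⁻¹ * t)) ≤ 1 - t := by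
  set c := (1 - r)⁻¹ with hc
  have hrpos : 0 < 1 - r := by linarith
  have hcpos : 0 < c := inv_pos.2 hrpos
  have hcr : c * (1 - r) = 1 := inv_mul_cancel₀ (ne_of_gt hrpos)
  have h1 : c * t + 1 ≤ Real.exp (c * t) := Real.add_one_le_exp _
  have h3 : 1 ≤ (1 - t) * (1 + c * t) := by nlinarith [mul_nonneg hcpos.le h0]
  have h4 : 1 ≤ (1 - t) * Real.exp (c * t) := by nlinarith
  have hE := Real.exp_pos (c * t)
  have hE2 : Real.exp (c * t) * (Real.exp (c * t))⁻¹ = 1 :=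
    mul_inv_cancel₀ (ne_of_gt hE)
  rw [Real.exp_neg]
  nlinarith [inv_pos.2 hE]

private lemma norm_prod_le_exp {f : ℕ → ℂ} {r : ℝ} (h0 : 0 ≤ r) (h1 : r < 1)
    (hf : ∀ i, ‖f i‖ ≤ 1 + r ^ i) (n : ℕ) :
    ‖∏ i ∈ Finset.range n, f i‖ ≤ Real.exp ((1 - r)⁻¹) := by
  rw [norm_prod]
  calc ∏ i ∈ Finset.range n, ‖f i‖
      ≤ ∏ i ∈ Finset.range n, Real.exp (r ^ i) :=
        Finset.prod_le_prod (fun i _ => norm_nonneg _)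
          (fun i _ => (hf i).trans (by linarith [Real.add_one_le_exp (r ^ i)]))
    _ = Real.exp (∑ i ∈ Finset.range n, r ^ i) := (Real.exp_sum _ _).symm
    _ ≤ _ := Real.exp_le_exp.2 (geom_sum_le_inv h0 h1 n)

private lemma exp_le_norm_prod {f : ℕ → ℂ} {r : ℝ} (h0 : 0 ≤ r) (h1 : r < 1)
    (hf : ∀ i, 1 - r ^ (i + 1) ≤ ‖f i‖) (n : ℕ) :
    Real.exp (-((1 - r)⁻¹ * (1 - r)⁻¹)) ≤ ‖∏ i ∈ Finset.range n, f i‖ := by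
  rw [norm_prod]
  have hsum : ∑ i ∈ Finset.range n, r ^ (i + 1) ≤ (1 - r)⁻¹ := by
    refine le_trans (Finset.sum_le_sum (fun i _ => ?_)) (geom_sum_le_inv h0 h1 n)
    calc r ^ (i + 1) = r * r ^ i := by rw [pow_succ']
      _ ≤ 1 * r ^ i := mul_le_mul_of_nonneg_right h1.le (pow_nonneg h0 i)
      _ = r ^ i := one_mul _
  calc Real.exp (-((1 - r)⁻¹ * (1 - r)⁻¹))
      ≤ Real.exp (-((1 - r)⁻¹ * ∑ i ∈ Finset.range n, r ^ (i + 1))) := by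
        apply Real.exp_le_exp.2
        apply neg_le_neg
        exact mul_le_mul_of_nonneg_left hsum (inv_nonneg.2 (by linarith))
    _ = ∏ i ∈ Finset.range n, Real.exp (-((1 - r)⁻¹ * r ^ (i + 1))) := by
        rw [← Real.exp_sum]
        congr 1
        rw [Finset.mul_sum]
        rw [Finset.sum_neg_distrib]
    _ ≤ ∏ i ∈ Finset.range n, ‖f i‖ := by
        apply Finset.prod_le_prod (fun i _ => (Real.exp_pos _).le)
        intro i _
        refine le_trans (exp_neg_le_one_sub (pow_nonneg h0 _) ?_ h1) (hf i)
        exact pow_le_of_le_one h0 h1.le (Nat.succ_ne_zero i)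

private lemma mult_aux {q x : ℂ} (hq1 : ‖q‖ < 1) (hx : ‖x‖ < 1) :
    Multipliable (fun i : ℕ => 1 - x * q ^ i) ∧ qPI x q ≠ 0 := by
  have hsm : ∀ i : ℕ, ‖x * q ^ i‖ ≤ ‖x‖ * ‖q‖ ^ i := fun i => by
    rw [norm_mul, norm_pow]
  have hlt : ∀ i : ℕ, ‖x * q ^ i‖ < 1 := fun i => by
    refine lt_of_le_of_lt (hsm i) ?_
    calc ‖x‖ * ‖q‖ ^ i ≤ ‖x‖ * 1 :=
          mul_le_mul_of_nonneg_left (pow_le_one₀ (norm_nonneg q) hq1.le) (norm_nonneg x)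
      _ < 1 := by rwa [mul_one]
  have hne : ∀ i : ℕ, (1 : ℂ) - x * q ^ i ≠ 0 := fun i => one_sub_ne_zero (hlt i)
  have hlog : Summable fun i : ℕ => Complex.log (1 - x * q ^ i) := by
    have hg : Summable (fun i : ℕ => 3 / 2 * (‖x‖ * ‖q‖ ^ i)) :=
      ((summable_geometric_of_lt_one (norm_nonneg q) hq1).mul_left _).mul_left _
    apply Summable.of_norm_bounded_eventually_nat hg
    have htz : Tendsto (fun i : ℕ => ‖x‖ * ‖q‖ ^ i) atTop (𝓝 0) := by
      simpa using (tendsto_pow_atTop_nhds_zero_of_lt_one (norm_nonneg q) hq1).const_mul ‖x‖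
    have hev : ∀ᶠ i : ℕ in atTop, ‖x‖ * ‖q‖ ^ i ≤ 1 / 2 :=
      htz.eventually (eventually_le_nhds (by norm_num))
    filter_upwards [hev] with i hi
    have h12 : ‖-(x * q ^ i)‖ ≤ 1 / 2 := by
      rw [norm_neg]; exact le_trans (hsm i) hi
    have hlb := Complex.norm_log_one_add_half_le_self h12
    rw [show (1 : ℂ) + -(x * q ^ i) = 1 - x * q ^ i by ring] at hlb
    refine hlb.trans ?_
    rw [norm_neg]
    exact mul_le_mul_of_nonneg_left (hsm i) (by norm_num)
  constructor
  · exact Complex.multipliable_of_summable_log hlog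
  · have h2 := Complex.cexp_tsum_eq_tprod hne hlog
    rw [qPI, ← h2]
    exact Complex.exp_ne_zero _

private lemma qPF_succ (x q : ℂ) (n : ℕ) :
    qPF x q (n + 1) = qPF x q n * (1 - x * q ^ n) := Finset.prod_range_succ _ _

private lemma qPI_split {q : ℂ} (hq1 : ‖q‖ < 1) (x : ℂ) (k : ℕ) (h : ‖x * q ^ k‖ < 1) :
    qPI x q = qPF x q k * qPI (x * q ^ k) q := by
  have hm := (mult_aux hq1 h).1
  have h2 : HasProd (fun n : ℕ => 1 - x * q ^ (n + k)) (qPI (x * q ^ k) q) := by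
    have he : (fun n : ℕ => 1 - x * q ^ (n + k)) = fun n : ℕ => 1 - x * q ^ k * q ^ n := by
      funext n; rw [pow_add]; ring
    rw [he]
    exact hm.hasProd
  have h3 : HasProd (fun i : ℕ => 1 - x * q ^ i)
      ((∏ i ∈ Finset.range k, (1 - x * q ^ i)) * qPI (x * q ^ k) q) :=
    HasProd.prod_range_mul (f := fun i : ℕ => 1 - x * q ^ i) (k := k) h2
  rw [qPI, h3.tprod_eq]
  rfl

private lemma ofScalars_sum_eq_tsum_mul (C : ℕ → ℂ) (w : ℂ) :
    (FormalMultilinearSeries.ofScalars ℂ C).sum w = ∑' n : ℕ, C n * w ^ n := by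
  rw [FormalMultilinearSeries.sum]
  exact tsum_congr fun n => by
    rw [FormalMultilinearSeries.ofScalars_apply_eq, smul_eq_mul]

private lemma ofScalars_radius_ge {C : ℕ → ℂ} {M : ℝ} (hM : ∀ n, ‖C n‖ ≤ M) :
    1 ≤ (FormalMultilinearSeries.ofScalars ℂ C).radius := by
  have := FormalMultilinearSeries.le_radius_of_bound
    (FormalMultilinearSeries.ofScalars ℂ C) M (r := 1) (fun n => by
      rw [FormalMultilinearSeries.ofScalars_norm]
      simpa using hM n)
  simpa using this

private lemma qbinom_machine {q : ℂ} (hq1 : ‖q‖ < 1) (C : ℕ → ℂ) (β γ : ℂ) (M : ℝ)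
    (hC0 : C 0 = 1)
    (hrec : ∀ n : ℕ, C (n + 1) * (1 - q ^ (n + 1)) = C n * (β - γ * q ^ n))
    (hM : ∀ n, ‖C n‖ ≤ M) :
    ∀ z : ℂ, ‖z‖ < 1 → ‖β * z‖ < 1 → ‖γ * z‖ < 1 →
      (∑' n : ℕ, C n * z ^ n) * qPI (β * z) q = qPI (γ * z) q := by
  have hsum : ∀ w : ℂ, ‖w‖ < 1 → Summable fun n : ℕ => C n * w ^ n := by
    intro w hw
    apply Summable.of_norm
    apply Summable.of_nonneg_of_le (fun n => norm_nonneg _) (fun n => ?_)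
      ((summable_geometric_of_lt_one (norm_nonneg w) hw).mul_left M)
    rw [norm_mul, norm_pow]
    exact mul_le_mul_of_nonneg_right (hM n) (by positivity)
  set F : ℂ → ℂ := fun w => ∑' n : ℕ, C n * w ^ n with hF
  have hFE : ∀ w : ℂ, ‖w‖ < 1 → (1 - β * w) * F w = (1 - γ * w) * F (q * w) := by
    intro w hw
    have hqw : ‖q * w‖ < 1 := by
      rw [norm_mul]
      nlinarith [norm_nonneg q, norm_nonneg w]
    have hs1 := hsum w hw
    have hs2 := hsum (q * w) hqw
    have hs2' : Summable fun n : ℕ => C n * q ^ n * w ^ n :=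
      hs2.congr fun n => by rw [mul_pow]; ring
    have hsh1 : Summable fun n : ℕ => C (n + 1) * w ^ (n + 1) :=
      (summable_nat_add_iff (f := fun n : ℕ => C n * w ^ n) 1).2 hs1
    have hsh2 : Summable fun n : ℕ => C (n + 1) * q ^ (n + 1) * w ^ (n + 1) :=
      (summable_nat_add_iff (f := fun n : ℕ => C n * q ^ n * w ^ n) 1).2 hs2'
    have hb1 : Summable fun n : ℕ => β * C n * w ^ (n + 1) :=
      (hs1.mul_left (β * w)).congr fun n => by ring
    have hb2 : Summable fun n : ℕ => γ * C n * q ^ n * w ^ (n + 1) :=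
      (hs2'.mul_left (γ * w)).congr fun n => by ring
    have e1 : F w = C 0 + ∑' n : ℕ, C (n + 1) * w ^ (n + 1) := by
      simp only [hF]
      rw [Summable.tsum_eq_zero_add hs1]
      simp
    have e2 : β * w * F w = ∑' n : ℕ, β * C n * w ^ (n + 1) := by
      simp only [hF]
      rw [← tsum_mul_left]
      exact tsum_congr fun n => by ring
    have e3 : F (q * w) = C 0 + ∑' n : ℕ, C (n + 1) * q ^ (n + 1) * w ^ (n + 1) := by
      simp only [hF]
      have he : (fun n : ℕ => C n * (q * w) ^ n) = fun n : ℕ => C n * q ^ n * w ^ n := by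
        funext n; rw [mul_pow]; ring
      rw [he, Summable.tsum_eq_zero_add hs2']
      simp
    have e4 : γ * w * F (q * w) = ∑' n : ℕ, γ * C n * q ^ n * w ^ (n + 1) := by
      simp only [hF]
      rw [← tsum_mul_left]
      exact tsum_congr fun n => by rw [mul_pow]; ring
    have lhs : (1 - β * w) * F w
        = C 0 + ∑' n : ℕ, (C (n + 1) * w ^ (n + 1) - β * C n * w ^ (n + 1)) := by
      rw [one_sub_mul, e2]
      rw [e1, add_sub_assoc, Summable.tsum_sub hsh1 hb1]
    have rhs : (1 - γ * w) * F (q * w)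
        = C 0 + ∑' n : ℕ, (C (n + 1) * q ^ (n + 1) * w ^ (n + 1)
            - γ * C n * q ^ n * w ^ (n + 1)) := by
      rw [one_sub_mul, e4]
      rw [e3, add_sub_assoc, Summable.tsum_sub hsh2 hb2]
    rw [lhs, rhs]
    congr 1
    apply tsum_congr
    intro n
    linear_combination (w ^ (n + 1)) * hrec n
  intro z hz hβz hγz
  have key : ∀ n : ℕ, F z * qPF (β * z) q n = qPF (γ * z) q n * F (q ^ n * z) := by
    intro n
    induction n with
    | zero => simp [qPF]
    | succ n ih =>
      have hw : ‖q ^ n * z‖ < 1 := by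
        rw [norm_mul, norm_pow]
        calc ‖q‖ ^ n * ‖z‖ ≤ 1 * ‖z‖ :=
              mul_le_mul_of_nonneg_right (pow_le_one₀ (norm_nonneg q) hq1.le) (norm_nonneg z)
          _ < 1 := by rwa [one_mul]
      have hfe := hFE (q ^ n * z) hw
      rw [qPF_succ, qPF_succ]
      have h1 : (1 : ℂ) - β * z * q ^ n = 1 - β * (q ^ n * z) := by ring
      have h2 : (1 : ℂ) - γ * z * q ^ n = 1 - γ * (q ^ n * z) := by ring
      have h3 : q * (q ^ n * z) = q ^ (n + 1) * z := by ring
      calc F z * (qPF (β * z) q n * (1 - β * z * q ^ n))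
          = qPF (γ * z) q n * ((1 - β * (q ^ n * z)) * F (q ^ n * z)) := by
            rw [h1, ← mul_assoc, ih]; ring
        _ = qPF (γ * z) q n * ((1 - γ * (q ^ n * z)) * F (q * (q ^ n * z))) := by rw [hfe]
        _ = qPF (γ * z) q n * (1 - γ * z * q ^ n) * F (q ^ (n + 1) * z) := by
            rw [h3, h2]; ring
  -- continuity of the power series at 0
  set p := FormalMultilinearSeries.ofScalars ℂ C with hp
  have hrad : 1 ≤ p.radius := ofScalars_radius_ge hM
  have hball : HasFPowerSeriesOnBall p.sum p 0 p.radius :=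
    p.hasFPowerSeriesOnBall (lt_of_lt_of_le zero_lt_one hrad)
  have hcont : ContinuousAt p.sum 0 := hball.analyticAt.continuousAt
  have hps : ∀ w : ℂ, p.sum w = F w := fun w => ofScalars_sum_eq_tsum_mul C w
  have htend0 : Tendsto (fun n : ℕ => q ^ n * z) atTop (𝓝 0) := by
    simpa using (tendsto_pow_atTop_nhds_zero_of_norm_lt_one hq1).mul_const z
  have hp0 : p.sum 0 = 1 := by
    rw [hps]
    simp only [hF]
    rw [tsum_eq_single 0 (fun n hn => by simp [zero_pow hn])]
    simp [hC0]
  have hFcont : Tendsto (fun n : ℕ => F (q ^ n * z)) atTop (𝓝 1) := by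
    have h5 := (hcont.tendsto).comp htend0
    rw [hp0] at h5
    exact h5.congr fun n => hps _
  have hL : Tendsto (fun n : ℕ => F z * qPF (β * z) q n) atTop
      (𝓝 (F z * qPI (β * z) q)) := by
    have := (mult_aux hq1 hβz).1.hasProd.tendsto_prod_nat
    exact this.const_mul (F z)
  have hR : Tendsto (fun n : ℕ => qPF (γ * z) q n * F (q ^ n * z)) atTop
      (𝓝 (qPI (γ * z) q * 1)) := by
    have := (mult_aux hq1 hγz).1.hasProd.tendsto_prod_nat
    exact this.mul hFcont
  have := tendsto_nhds_unique (hL.congr (fun n => key n)) hR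
  rw [mul_one] at this
  exact this

/-- For `|a| < 1` and `|q - 1/2| < 1/10`, the function `h(z) = (az;q)_∞/(z;q)_∞` is
analytic on the open unit disc and its `ν`-th Taylor coefficient (`ν ≥ 1`) equals
`(1/(q;q)_∞) ∑_{j≥0} ((a q^{-j};q)_∞/(q^{-j};q)_j) q^{jν}`, the series converging
absolutely. -/
theorem qPochhammer_quotient_taylor_coefficients
    (a q : ℂ) (ha : ‖a‖ < 1) (hq : ‖q - 1 / 2‖ < 1 / 10) :
    AnalyticOnNhd ℂ (fun z => qPI (a * z) q / qPI z q) {z : ℂ | ‖z‖ < 1} ∧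
    ∀ ν : ℕ, 1 ≤ ν →
      Summable (fun j : ℕ =>
        ‖(qPI (a * q ^ (-(j : ℤ))) q / qPF (q ^ (-(j : ℤ))) q j) * q ^ (j * ν)‖) ∧
      iteratedDeriv ν (fun z => qPI (a * z) q / qPI z q) 0 / (Nat.factorial ν) =
        (1 / qPI q q) *
          ∑' j : ℕ, (qPI (a * q ^ (-(j : ℤ))) q / qPF (q ^ (-(j : ℤ))) q j) * q ^ (j * ν) := by
  have h12 : ‖(1 / 2 : ℂ)‖ = 1 / 2 := by
    rw [show (1 / 2 : ℂ) = ((1 / 2 : ℝ) : ℂ) by norm_num, Complex.norm_real]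
    norm_num
  have hq5 : ‖q‖ < 3 / 5 := by
    calc ‖q‖ = ‖q - 1 / 2 + 1 / 2‖ := by ring_nf
      _ ≤ ‖q - 1 / 2‖ + ‖(1 / 2 : ℂ)‖ := norm_add_le _ _
      _ < 3 / 5 := by rw [h12]; linarith
  have hq1 : ‖q‖ < 1 := lt_trans hq5 (by norm_num)
  have hq0 : q ≠ 0 := by
    have h1 : ‖(1 / 2 : ℂ)‖ - ‖q‖ ≤ ‖(1 / 2 : ℂ) - q‖ := norm_sub_norm_le _ _
    rw [norm_sub_rev, h12] at h1
    have : (0 : ℝ) < ‖q‖ := by linarith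
    exact norm_pos_iff.1 this
  have hr0 : (0 : ℝ) ≤ ‖q‖ := norm_nonneg q
  -- basic smallness facts
  have hqq : ∀ i : ℕ, ‖q * q ^ i‖ < 1 := fun i => by
    rw [norm_mul, norm_pow]
    calc ‖q‖ * ‖q‖ ^ i ≤ ‖q‖ * 1 :=
          mul_le_mul_of_nonneg_left (pow_le_one₀ hr0 hq1.le) hr0
      _ < 1 := by rwa [mul_one]
  have haq : ∀ i : ℕ, ‖a * q ^ i‖ < 1 := fun i => by
    rw [norm_mul, norm_pow]
    calc ‖a‖ * ‖q‖ ^ i ≤ ‖a‖ * 1 :=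
          mul_le_mul_of_nonneg_left (pow_le_one₀ hr0 hq1.le) (norm_nonneg a)
      _ < 1 := by rwa [mul_one]
  have hqPFq_ne : ∀ n : ℕ, qPF q q n ≠ 0 := by
    intro n
    rw [qPF]
    exact Finset.prod_ne_zero_iff.2 fun i _ => one_sub_ne_zero (hqq i)
  -- the Taylor coefficients
  set cb : ℕ → ℂ := fun n => qPF a q n / qPF q q n with hcb
  have hcb0 : cb 0 = 1 := by simp [hcb, qPF]
  have hcbrec : ∀ n : ℕ, cb (n + 1) * (1 - q ^ (n + 1)) = cb n * (1 - a * q ^ n) := by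
    intro n
    have h3 : (1 : ℂ) - q * q ^ n = 1 - q ^ (n + 1) := by rw [← pow_succ']
    have hnz : (1 : ℂ) - q ^ (n + 1) ≠ 0 := by rw [← h3]; exact one_sub_ne_zero (hqq n)
    rw [hcb]
    simp only
    rw [qPF_succ, qPF_succ, h3]
    field_simp [hqPFq_ne n]
  set S : ℝ := (1 - ‖q‖)⁻¹ with hS
  set M : ℝ := Real.exp S / Real.exp (-(S * S)) with hM
  have hub : ∀ (x : ℂ), ‖x‖ ≤ 1 → ∀ n, ‖qPF x q n‖ ≤ Real.exp S := by
    intro x hx n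
    apply norm_prod_le_exp hr0 hq1 (fun i => ?_) n
    calc ‖1 - x * q ^ i‖ ≤ ‖(1 : ℂ)‖ + ‖x * q ^ i‖ := norm_sub_le _ _
      _ ≤ 1 + ‖q‖ ^ i := by
          rw [norm_one, norm_mul, norm_pow]
          have : ‖x‖ * ‖q‖ ^ i ≤ 1 * ‖q‖ ^ i :=
            mul_le_mul_of_nonneg_right hx (by positivity)
          linarith [this]
  have hlbq : ∀ n, Real.exp (-(S * S)) ≤ ‖qPF q q n‖ := by
    intro n
    apply exp_le_norm_prod hr0 hq1 (fun i => ?_) n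
    have h1 : ‖(1 : ℂ)‖ - ‖q * q ^ i‖ ≤ ‖1 - q * q ^ i‖ := norm_sub_norm_le _ _
    rw [norm_one, norm_mul, norm_pow, ← pow_succ'] at h1
    exact h1
  have hcbM : ∀ n, ‖cb n‖ ≤ M := by
    intro n
    rw [hcb]
    simp only
    rw [norm_div, hM]
    exact div_le_div₀ (Real.exp_pos _).le (hub a ha.le n) (Real.exp_pos _) (hlbq n)
  -- the power series for h
  set p := FormalMultilinearSeries.ofScalars ℂ cb with hp
  have hrad : 1 ≤ p.radius := ofScalars_radius_ge hcbM
  have hball : HasFPowerSeriesOnBall p.sum p 0 1 :=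
    (p.hasFPowerSeriesOnBall (lt_of_lt_of_le zero_lt_one hrad)).mono
      zero_lt_one hrad
  have hmain := qbinom_machine hq1 cb 1 a M hcb0
    (fun n => by simpa using hcbrec n) hcbM
  have hEq : ∀ z : ℂ, ‖z‖ < 1 → qPI (a * z) q / qPI z q = p.sum z := by
    intro z hz
    have haz : ‖a * z‖ < 1 := by
      rw [norm_mul]
      calc ‖a‖ * ‖z‖ ≤ 1 * ‖z‖ := mul_le_mul_of_nonneg_right ha.le (norm_nonneg z)
        _ < 1 := by rwa [one_mul]
    have h1z : ‖(1 : ℂ) * z‖ < 1 := by rwa [one_mul]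
    have h := hmain z hz h1z haz
    rw [one_mul] at h
    have hzne := (mult_aux hq1 hz).2
    rw [ofScalars_sum_eq_tsum_mul]
    rw [div_eq_iff hzne, ← h]
  have hopen : IsOpen {z : ℂ | ‖z‖ < 1} := isOpen_lt continuous_norm continuous_const
  have hmem : ∀ z : ℂ, ‖z‖ < 1 → z ∈ Metric.eball (0 : ℂ) 1 := by
    intro z hz
    rw [Metric.mem_eball, edist_eq_enorm_sub, sub_zero, enorm_eq_nnnorm]
    exact_mod_cast hz
  constructor
  · intro z hz
    have h1 : AnalyticAt ℂ p.sum z := hball.analyticOnNhd z (hmem z hz)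
    apply h1.congr
    exact Filter.eventuallyEq_of_mem (hopen.mem_nhds hz) (fun w hw => (hEq w hw).symm)
  · intro ν hν
    have hν0 : ν ≠ 0 := Nat.one_le_iff_ne_zero.mp hν
    -- iterated derivative computation
    have h0mem : (0 : ℂ) ∈ {z : ℂ | ‖z‖ < 1} := by simp
    have hνEq : iteratedDeriv ν (fun z => qPI (a * z) q / qPI z q) 0
        = iteratedDeriv ν p.sum 0 :=
      Filter.EventuallyEq.iteratedDeriv_eq ν
        (Filter.eventuallyEq_of_mem (hopen.mem_nhds h0mem) (fun w hw => hEq w hw))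
    have hfact := hball.factorial_smul (1 : ℂ) ν
    have hpν : (p ν fun _ => (1 : ℂ)) = cb ν := by
      rw [hp, FormalMultilinearSeries.ofScalars_apply_eq]
      simp
    have hiter : iteratedDeriv ν p.sum 0 = (Nat.factorial ν : ℂ) * cb ν := by
      rw [iteratedDeriv_eq_iteratedFDeriv, ← hfact, hpν, nsmul_eq_mul]
    have hfne : (Nat.factorial ν : ℂ) ≠ 0 :=
      Nat.cast_ne_zero.2 (Nat.factorial_ne_zero ν)
    have hLHS : iteratedDeriv ν (fun z => qPI (a * z) q / qPI z q) 0 / (Nat.factorial ν : ℂ)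
        = cb ν := by
      rw [hνEq, hiter, mul_comm, mul_div_assoc, div_self hfne, mul_one]
    -- the partial fraction coefficients
    set Cd : ℕ → ℂ := fun j => ∏ i ∈ Finset.range j, ((q ^ (i + 1) - a) / (q ^ (i + 1) - 1))
      with hCd
    have hden_ne : ∀ i : ℕ, q ^ (i + 1) - (1 : ℂ) ≠ 0 := by
      intro i
      intro h
      have : q ^ (i + 1) = 1 := by linear_combination h
      have hn : ‖q ^ (i + 1)‖ < 1 := by
        rw [norm_pow]
        exact pow_lt_one₀ hr0 hq1 (Nat.succ_ne_zero i)
      rw [this] at hn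
      simp at hn
    have hCd0 : Cd 0 = 1 := by simp [hCd]
    have hCdrec : ∀ n : ℕ, Cd (n + 1) * (1 - q ^ (n + 1)) = Cd n * (a - q * q ^ n) := by
      intro n
      rw [hCd]
      simp only
      rw [Finset.prod_range_succ]
      have h3 : q * q ^ n = q ^ (n + 1) := (pow_succ' q n).symm
      rw [h3]
      have hD : (∏ x ∈ Finset.range n, (q ^ (x + 1) - 1)) ≠ 0 :=
        Finset.prod_ne_zero_iff.2 fun i _ => hden_ne i
      rw [Finset.prod_div_distrib]
      field_simp [hD, hden_ne n]
      ring
    have hCdM : ∀ j, ‖Cd j‖ ≤ M := by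
      intro j
      have hCdEq : Cd j = (∏ i ∈ Finset.range j, (q ^ (i + 1) - a))
          / ∏ i ∈ Finset.range j, (q ^ (i + 1) - 1) := by
        rw [hCd]; simp only; rw [Finset.prod_div_distrib]
      rw [hCdEq, norm_div, hM]
      apply div_le_div₀ (Real.exp_pos _).le ?_ (Real.exp_pos _) ?_
      · apply norm_prod_le_exp hr0 hq1 (fun i => ?_) j
        calc ‖q ^ (i + 1) - a‖ ≤ ‖q ^ (i + 1)‖ + ‖a‖ := norm_sub_le _ _
          _ ≤ 1 + ‖q‖ ^ i := by
              rw [norm_pow]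
              have h1 : ‖q‖ ^ (i + 1) ≤ ‖q‖ ^ i := by
                calc ‖q‖ ^ (i + 1) = ‖q‖ * ‖q‖ ^ i := pow_succ' _ _
                  _ ≤ 1 * ‖q‖ ^ i :=
                      mul_le_mul_of_nonneg_right hq1.le (pow_nonneg hr0 i)
                  _ = ‖q‖ ^ i := one_mul _
              linarith [ha.le]
      · apply exp_le_norm_prod hr0 hq1 (fun i => ?_) j
        have h1 : ‖(1 : ℂ)‖ - ‖q ^ (i + 1)‖ ≤ ‖1 - q ^ (i + 1)‖ := norm_sub_norm_le _ _
        rw [norm_one, norm_pow] at h1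
        rw [norm_sub_rev] at h1
        exact h1
    -- apply the machine with β = a, γ = q, z = q^ν
    have hzν : ‖q ^ ν‖ < 1 := by
      rw [norm_pow]; exact pow_lt_one₀ hr0 hq1 hν0
    have haν : ‖a * q ^ ν‖ < 1 := by
      rw [norm_mul]
      calc ‖a‖ * ‖q ^ ν‖ ≤ 1 * ‖q ^ ν‖ :=
            mul_le_mul_of_nonneg_right ha.le (norm_nonneg _)
        _ < 1 := by rwa [one_mul]
    have hqν : ‖q * q ^ ν‖ < 1 := hqq ν
    have hD := qbinom_machine hq1 Cd a q M hCd0 hCdrec hCdM (q ^ ν) hzν haν hqν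
    -- identify the summands
    have hAν_ne : qPI (a * q ^ ν) q ≠ 0 := (mult_aux hq1 haν).2
    have hQν_ne : qPI (q * q ^ ν) q ≠ 0 := (mult_aux hq1 hqν).2
    have htj : ∀ j : ℕ, (qPI (a * q ^ (-(j : ℤ))) q / qPF (q ^ (-(j : ℤ))) q j) * q ^ (j * ν)
        = qPI a q * (Cd j * (q ^ ν) ^ j) := by
      intro j
      have hzp : q ^ (-(j : ℤ)) * q ^ j = 1 := by
        rw [← zpow_natCast q j, ← zpow_add₀ hq0]
        simp
      have he : a * q ^ (-(j : ℤ)) * q ^ j = a := by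
        rw [mul_assoc, hzp, mul_one]
      have hsplit : qPI (a * q ^ (-(j : ℤ))) q
          = qPF (a * q ^ (-(j : ℤ))) q j * qPI a q := by
        have := qPI_split hq1 (a * q ^ (-(j : ℤ))) j (by rw [he]; exact ha)
        rwa [he] at this
      have hratio : qPF (a * q ^ (-(j : ℤ))) q j / qPF (q ^ (-(j : ℤ))) q j = Cd j := by
        rw [qPF, qPF, ← Finset.prod_div_distrib, hCd]
        simp only
        rw [← Finset.prod_range_reflect (fun i => ((q ^ (i + 1) - a) / (q ^ (i + 1) - 1))) j]
        apply Finset.prod_congr rfl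
        intro i hi
        have hij : i < j := Finset.mem_range.mp hi
        have hm1 : j - 1 - i + 1 = j - i := by omega
        rw [hm1]
        set m : ℕ := j - i with hmdef
        have hm0 : m ≠ 0 := by omega
        have hqm : q ^ m ≠ 0 := pow_ne_zero _ hq0
        have hinv : q ^ (-(j : ℤ)) * q ^ i = (q ^ m)⁻¹ := by
          rw [← zpow_natCast q i, ← zpow_natCast q m, ← zpow_add₀ hq0, ← zpow_neg]
          congr 1
          have : (m : ℤ) = (j : ℤ) - (i : ℤ) := by
            rw [hmdef]; push_cast [Nat.cast_sub hij.le]; ring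
          rw [this]; ring
        have hnm : ‖q ^ m‖ < 1 := by
          rw [norm_pow]; exact pow_lt_one₀ hr0 hq1 hm0
        have hd1 : (1 : ℂ) - (q ^ m)⁻¹ ≠ 0 := by
          apply one_sub_ne_zero'
          rw [norm_inv, ne_eq, inv_eq_one]
          exact ne_of_lt hnm
        have hd2 : q ^ m - 1 ≠ 0 := by
          intro hcon
          have : q ^ m = 1 := by linear_combination hcon
          rw [this] at hnm; simp at hnm
        rw [mul_assoc, hinv]
        rw [div_eq_div_iff hd1 hd2]
        field_simp
      rw [hsplit]
      have hpm : q ^ (j * ν) = (q ^ ν) ^ j := by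
        rw [← pow_mul, Nat.mul_comm]
      rw [hpm]
      rw [← hratio]
      ring
    have hsummand : Summable (fun j : ℕ => Cd j * (q ^ ν) ^ j) := by
      apply Summable.of_norm
      apply Summable.of_nonneg_of_le (fun n => norm_nonneg _) (fun n => ?_)
        ((summable_geometric_of_lt_one (norm_nonneg (q ^ ν)) hzν).mul_left M)
      rw [norm_mul, norm_pow]
      exact mul_le_mul_of_nonneg_right (hCdM n) (by positivity)
    constructor
    · -- summability
      apply Summable.of_nonneg_of_le (fun j => norm_nonneg _) (fun j => ?_)
        (((summable_geometric_of_lt_one (norm_nonneg (q ^ ν)) hzν).mul_left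
          (‖qPI a q‖ * M)))
      rw [htj j, norm_mul, norm_mul, norm_pow, mul_assoc]
      apply mul_le_mul_of_nonneg_left ?_ (norm_nonneg _)
      exact mul_le_mul_of_nonneg_right (hCdM j) (by positivity)
    · -- the identity
      rw [hLHS]
      have hsum_eq : ∑' j : ℕ, (qPI (a * q ^ (-(j : ℤ))) q / qPF (q ^ (-(j : ℤ))) q j)
            * q ^ (j * ν) = qPI a q * (qPI (q * q ^ ν) q / qPI (a * q ^ ν) q) := by
        rw [tsum_congr htj, tsum_mul_left]
        congr 1
        rw [← hD, mul_div_assoc, div_self hAν_ne, mul_one]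
      rw [hsum_eq]
      have s1 : qPI a q = qPF a q ν * qPI (a * q ^ ν) q := qPI_split hq1 a ν haν
      have s2 : qPI q q = qPF q q ν * qPI (q * q ^ ν) q := qPI_split hq1 q ν hqν
      rw [hcb]
      simp only
      rw [s1, s2]
      field_simp [hqPFq_ne ν, hAν_ne, hQν_ne]
      ring_nf
      rw [mul_assoc, mul_inv_cancel₀ (by rwa [mul_comm] at hAν_ne), mul_one]
end
end

section
/- Let a, q ∈ ℂ satisfy |a| < 1 and |q - 1/2| < 1/10. Then for every z ∈ ℂ with z q^j ≠ 1 for all integers j ≥ 0, the Mittag-Leffler expansion (az;q)_∞/(z;q)_∞ = 1 + (1/(q;q)_∞) · ∑_{j=0}^∞ ( (a q^{-j};q)_∞ / (q^{-j};q)_j ) · (z q^j / (1 - z q^j)) holds, the series being absolutely convergent. -/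
open Complex Filter Topology

set_option maxHeartbeats 1000000

noncomputable section

namespace QML

/-- exp x ≤ (1-x)⁻¹ for 0 ≤ x < 1 -/
lemma exp_le_inv_one_sub {x : ℝ} (h0 : 0 ≤ x) (h1 : x < 1) : Real.exp x ≤ (1 - x)⁻¹ := by
  have h2 : 0 < 1 - x := by linarith
  have h3 : (1 - x) * Real.exp x ≤ 1 := by
    have := Real.add_one_le_exp (-x)
    have h4 : Real.exp (-x) = (Real.exp x)⁻¹ := Real.exp_neg x
    rw [h4] at this
    have h5 : 0 < Real.exp x := Real.exp_pos x
    calc (1 - x) * Real.exp x ≤ (Real.exp x)⁻¹ * Real.exp x := by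
          apply mul_le_mul_of_nonneg_right _ h5.le
          linarith
      _ = 1 := inv_mul_cancel₀ h5.ne'
  have h5 : 0 < Real.exp x := Real.exp_pos x
  rw [← sub_nonneg]
  have h6 : (1-x)⁻¹ - Real.exp x = ((1 - (1-x) * Real.exp x)) * (1-x)⁻¹ := by
    field_simp
  rw [h6]
  apply mul_nonneg (by linarith) (by positivity)

lemma exp_neg_three_mul_le {x : ℝ} (h0 : 0 ≤ x) (h1 : x ≤ 3/5) : Real.exp (-(3*x)) ≤ 1 - x := by
  have h2 := Real.add_one_le_exp (3*x)
  have h3 : 0 < Real.exp (3*x) := Real.exp_pos _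
  have h4 : Real.exp (-(3*x)) = (Real.exp (3*x))⁻¹ := Real.exp_neg _
  rw [h4]
  rw [inv_le_iff_one_le_mul₀' h3]
  nlinarith

lemma exp_nine_halves_le : Real.exp (9/2) ≤ 400 := by
  have h : Real.exp (9/2) = (Real.exp (9/20))^10 := by
    rw [← Real.exp_nat_mul]; norm_num
  have h2 : Real.exp (9/20) ≤ 20/11 := by
    have := exp_le_inv_one_sub (x := 9/20) (by norm_num) (by norm_num)
    calc Real.exp (9/20) ≤ (1 - 9/20 : ℝ)⁻¹ := this
      _ = 20/11 := by norm_num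
  calc (Real.exp (9/2)) = (Real.exp (9/20))^10 := h
    _ ≤ (20/11)^10 := by
        apply pow_le_pow_left₀ (Real.exp_pos _).le h2
    _ ≤ 400 := by norm_num

lemma exp_three_le : Real.exp 3 ≤ 40 := by
  have h : Real.exp 3 = (Real.exp (3/10))^10 := by
    rw [← Real.exp_nat_mul]; norm_num
  have h2 : Real.exp (3/10) ≤ 10/7 := by
    have := exp_le_inv_one_sub (x := 3/10) (by norm_num) (by norm_num)
    calc Real.exp (3/10) ≤ (1 - 3/10 : ℝ)⁻¹ := this
      _ = 10/7 := by norm_num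
  calc (Real.exp 3) = (Real.exp (3/10))^10 := h
    _ ≤ (10/7)^10 := pow_le_pow_left₀ (Real.exp_pos _).le h2 10
    _ ≤ 40 := by norm_num


/-- difference of two products bound -/
lemma prod_diff_bound (x y : ℕ → ℂ) (R : ℝ) (hR : 0 ≤ R)
    (hx : ∀ i, ‖x i‖ ≤ R) (hy : ∀ i, ‖y i‖ ≤ R) (n : ℕ) :
    ‖(∏ i ∈ Finset.range n, x i) - ∏ i ∈ Finset.range n, y i‖ ≤
      (∑ i ∈ Finset.range n, ‖x i - y i‖) * R ^ (n - 1) := by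
  induction n with
  | zero => simp
  | succ n ih =>
    rw [Finset.prod_range_succ, Finset.prod_range_succ, Finset.sum_range_succ]
    have key : (∏ i ∈ Finset.range n, x i) * x n - (∏ i ∈ Finset.range n, y i) * y n
        = ((∏ i ∈ Finset.range n, x i) - ∏ i ∈ Finset.range n, y i) * x n
          + (∏ i ∈ Finset.range n, y i) * (x n - y n) := by ring
    rw [key]
    have hyn : ‖∏ i ∈ Finset.range n, y i‖ ≤ R ^ n := by
      rw [norm_prod]
      calc ∏ i ∈ Finset.range n, ‖y i‖ ≤ ∏ _i ∈ Finset.range n, R :=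
            Finset.prod_le_prod (fun i _ => norm_nonneg _) (fun i _ => hy i)
        _ = R ^ n := by rw [Finset.prod_const, Finset.card_range]
    have h1 : ‖((∏ i ∈ Finset.range n, x i) - ∏ i ∈ Finset.range n, y i) * x n‖
        ≤ ((∑ i ∈ Finset.range n, ‖x i - y i‖) * R ^ (n - 1)) * R := by
      rw [norm_mul]
      exact mul_le_mul ih (hx n) (norm_nonneg _)
        (by positivity)
    have h2 : ‖(∏ i ∈ Finset.range n, y i) * (x n - y n)‖ ≤ R ^ n * ‖x n - y n‖ := by
      rw [norm_mul]
      exact mul_le_mul_of_nonneg_right hyn (norm_nonneg _)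
    refine le_trans (norm_add_le _ _) (le_trans (add_le_add h1 h2) ?_)
    rcases n with _ | m
    · simp
    · have he : (m + 1 : ℕ) - 1 = m := rfl
      have h4 : (m + 1 + 1 : ℕ) - 1 = m + 1 := rfl
      rw [he, h4]
      have hs : (0:ℝ) ≤ ∑ i ∈ Finset.range (m+1), ‖x i - y i‖ :=
        Finset.sum_nonneg (fun i _ => norm_nonneg _)
      have h3 : R ^ m * R = R ^ (m+1) := by ring
      rw [add_mul, mul_assoc, h3]
      have := mul_comm (R^(m+1)) ‖x (m+1) - y (m+1)‖
      linarith

lemma hasProd_zero_of_factor {f : ℕ → ℂ} (i0 : ℕ) (h : f i0 = 0) : HasProd f 0 := by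
  have : ∀ᶠ s : Finset ℕ in atTop, ∏ i ∈ s, f i = 0 := by
    filter_upwards [Filter.eventually_ge_atTop ({i0} : Finset ℕ)] with s hs
    exact Finset.prod_eq_zero (hs (Finset.mem_singleton_self i0)) h
  exact tendsto_const_nhds.congr' (by filter_upwards [this] with s hs using hs.symm)

section Qfacts

variable {q : ℂ} (hr1 : ‖q‖ ≤ 3/5) (hq0 : q ≠ 0)

include hr1

lemma sum_pow_le (x : ℂ) (n : ℕ) : ∑ i ∈ Finset.range n, ‖x * q ^ i‖ ≤ ‖x‖ * (5/2) := by
  have h0 : (0:ℝ) ≤ ‖q‖ := norm_nonneg _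
  have key : ∑ i ∈ Finset.range n, ‖q‖ ^ i ≤ 5/2 := by
    calc ∑ i ∈ Finset.range n, ‖q‖ ^ i ≤ ∑ i ∈ Finset.range n, (3/5:ℝ) ^ i :=
          Finset.sum_le_sum (fun i _ => pow_le_pow_left₀ h0 hr1 i)
      _ ≤ ∑' i : ℕ, (3/5:ℝ) ^ i := by
          apply Summable.sum_le_tsum _ (fun i _ => by positivity)
          exact summable_geometric_of_lt_one (by norm_num) (by norm_num)
      _ = (1 - 3/5:ℝ)⁻¹ := tsum_geometric_of_lt_one (by norm_num) (by norm_num)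
      _ = 5/2 := by norm_num
  calc ∑ i ∈ Finset.range n, ‖x * q ^ i‖ = ∑ i ∈ Finset.range n, ‖x‖ * ‖q‖ ^ i := by
        simp [norm_mul, norm_pow]
    _ = ‖x‖ * ∑ i ∈ Finset.range n, ‖q‖ ^ i := by rw [Finset.mul_sum]
    _ ≤ ‖x‖ * (5/2) := by
        apply mul_le_mul_of_nonneg_left key (norm_nonneg x)

/-- the factors tend to allow smallness -/
lemma eventually_small (x : ℂ) (ε : ℝ) (hε : 0 < ε) : ∀ᶠ i : ℕ in atTop, ‖x * q ^ i‖ ≤ ε := by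
  have hq1 : ‖q‖ < 1 := lt_of_le_of_lt hr1 (by norm_num)
  have ht : Tendsto (fun i : ℕ => x * q ^ i) atTop (𝓝 0) := by
    simpa using (tendsto_pow_atTop_nhds_zero_of_norm_lt_one hq1).const_mul x
  have := ht.norm
  simp only [norm_zero] at this
  exact this.eventually (eventually_le_nhds hε)

lemma multipliable_aux (x : ℂ) : Multipliable (fun i : ℕ => 1 - x * q ^ i) := by
  by_cases hzero : ∃ i, 1 - x * q ^ i = 0
  · obtain ⟨i0, hi0⟩ := hzero
    exact ⟨0, hasProd_zero_of_factor i0 hi0⟩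
  · push_neg at hzero
    apply Complex.multipliable_of_summable_log
    obtain ⟨N, hN⟩ := (eventually_small hr1 x (1/2) (by norm_num)).exists_forall_of_atTop
    rw [← summable_nat_add_iff N]
    apply Summable.of_norm_bounded (g := fun n => (3/2 * ‖x * q ^ N‖) * (3/5)^n)
    · exact (summable_geometric_of_lt_one (by norm_num) (by norm_num)).mul_left _
    · intro n
      have hb : ‖x * q ^ (n + N)‖ ≤ ‖x * q ^ N‖ * (3/5)^n := by
        have he : x * q^(n+N) = (x*q^N) * q^n := by rw [pow_add]; ring
        rw [he, norm_mul, norm_pow]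
        have h5 := pow_le_pow_left₀ (norm_nonneg q) hr1 n
        have h6 := norm_nonneg (x * q^N)
        nlinarith [pow_nonneg (norm_nonneg q) n]
      have hsmall : ‖-(x * q ^ (n + N))‖ ≤ 1/2 := by
        rw [norm_neg]; exact hN (n+N) (by omega)
      have hlog := Complex.norm_log_one_add_half_le_self hsmall
      rw [show (1 : ℂ) + -(x*q^(n+N)) = 1 - x*q^(n+N) by ring] at hlog
      rw [norm_neg] at hlog
      calc ‖Complex.log (1 - x * q ^ (n + N))‖ ≤ 3/2 * ‖x * q^(n+N)‖ := hlog
        _ ≤ 3/2 * (‖x * q ^ N‖ * (3/5)^n) := by linarith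
        _ = (3/2 * ‖x * q ^ N‖) * (3/5)^n := by ring


lemma qPI_split (x : ℂ) (N : ℕ) : qPI x q = qPF x q N * qPI (x * q ^ N) q := by
  have hm : Multipliable (fun n : ℕ => 1 - x * q ^ (n + N)) := by
    apply (multipliable_aux hr1 (x * q ^ N)).congr
    intro n
    rw [pow_add]; ring
  rw [qPI, qPF, ← Multipliable.prod_mul_tprod_nat_mul' (f := fun i => 1 - x * q ^ i) (k := N) hm]
  congr 1
  apply tprod_congr
  intro n
  rw [pow_add]; ring

lemma qPI_factor (x : ℂ) : qPI x q = (1 - x) * qPI (x * q) q := by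
  have h := qPI_split hr1 x 1
  simpa [qPF, Finset.prod_range_one, pow_one] using h

lemma tendsto_qPF (x : ℂ) : Tendsto (fun N => qPF x q N) atTop (𝓝 (qPI x q)) := by
  simpa [qPF, qPI] using (multipliable_aux hr1 x).hasProd.tendsto_prod_nat

lemma qPF_succ (x : ℂ) (n : ℕ) : qPF x q (n+1) = qPF x q n * (1 - x * q ^ n) :=
  Finset.prod_range_succ _ _

lemma qPF_norm_le (x : ℂ) (n : ℕ) : ‖qPF x q n‖ ≤ Real.exp (‖x‖ * (5/2)) := by
  rw [qPF, norm_prod]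
  calc ∏ i ∈ Finset.range n, ‖1 - x * q ^ i‖
      ≤ ∏ i ∈ Finset.range n, Real.exp ‖x * q ^ i‖ := by
        apply Finset.prod_le_prod (fun i _ => norm_nonneg _)
        intro i _
        calc ‖1 - x * q ^ i‖ ≤ ‖(1:ℂ)‖ + ‖x * q ^ i‖ := norm_sub_le _ _
          _ = ‖x * q ^ i‖ + 1 := by rw [norm_one]; ring
          _ ≤ Real.exp ‖x * q ^ i‖ := Real.add_one_le_exp _
    _ = Real.exp (∑ i ∈ Finset.range n, ‖x * q ^ i‖) := (Real.exp_sum _ _).symm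
    _ ≤ Real.exp (‖x‖ * (5/2)) := Real.exp_le_exp.mpr (sum_pow_le hr1 x n)

lemma qPI_near_one (x : ℂ) (hx : ‖x‖ ≤ 1/10) : ‖qPI x q - 1‖ ≤ 6 * ‖x‖ := by
  have hexp : Real.exp (‖x‖ * (5/2)) ≤ 2 := by
    have h1 : Real.exp (‖x‖ * (5/2)) ≤ Real.exp (1/4) :=
      Real.exp_le_exp.mpr (by nlinarith [norm_nonneg x])
    have h2 := exp_le_inv_one_sub (x := 1/4) (by norm_num) (by norm_num)
    calc Real.exp (‖x‖ * (5/2)) ≤ Real.exp (1/4) := h1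
      _ ≤ (1 - 1/4 : ℝ)⁻¹ := h2
      _ ≤ 2 := by norm_num
  have hb : ∀ N, ‖qPF x q N - 1‖ ≤ 6 * ‖x‖ := by
    intro N
    have htel : qPF x q N - 1 = ∑ k ∈ Finset.range N, (qPF x q (k+1) - qPF x q k) := by
      rw [Finset.sum_range_sub (f := fun k => qPF x q k)]
      simp [qPF]
    rw [htel]
    calc ‖∑ k ∈ Finset.range N, (qPF x q (k+1) - qPF x q k)‖
        ≤ ∑ k ∈ Finset.range N, ‖qPF x q (k+1) - qPF x q k‖ := norm_sum_le _ _
      _ ≤ ∑ k ∈ Finset.range N, 2 * ‖x * q ^ k‖ := by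
          apply Finset.sum_le_sum
          intro k _
          have he : qPF x q (k+1) - qPF x q k = -(qPF x q k * (x * q ^ k)) := by
            rw [qPF_succ hr1]; ring
          rw [he, norm_neg, norm_mul]
          exact mul_le_mul (le_trans (qPF_norm_le hr1 x k) hexp) le_rfl
            (norm_nonneg _) (by norm_num)
      _ = 2 * ∑ k ∈ Finset.range N, ‖x * q ^ k‖ := by rw [Finset.mul_sum]
      _ ≤ 2 * (‖x‖ * (5/2)) := by
          have := sum_pow_le hr1 x N
          nlinarith
      _ ≤ 6 * ‖x‖ := by nlinarith [norm_nonneg x]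
  have hlim : Tendsto (fun N => ‖qPF x q N - 1‖) atTop (𝓝 ‖qPI x q - 1‖) :=
    ((tendsto_qPF hr1 x).sub tendsto_const_nhds).norm
  exact le_of_tendsto hlim (Filter.Eventually.of_forall hb)

lemma qPI_ne_zero (x : ℂ) (hx : ∀ i : ℕ, x * q ^ i ≠ 1) : qPI x q ≠ 0 := by
  obtain ⟨N, hN⟩ := (eventually_small hr1 x (1/10) (by norm_num)).exists_forall_of_atTop
  rw [qPI_split hr1 x N]
  apply mul_ne_zero
  · rw [qPF, Finset.prod_ne_zero_iff]
    intro i _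
    exact sub_ne_zero.mpr (Ne.symm (hx i))
  · intro h0
    have hnear := qPI_near_one hr1 (x * q ^ N) (hN N le_rfl)
    rw [h0, zero_sub, norm_neg, norm_one] at hnear
    nlinarith [hN N le_rfl]

lemma norm_qpow_succ_le (j : ℕ) : ‖q * q ^ j‖ ≤ 3/5 := by
  rw [norm_mul, norm_pow]
  have h1 : ‖q‖ ^ j ≤ 1 := pow_le_one₀ (norm_nonneg q) (le_trans hr1 (by norm_num))
  nlinarith [norm_nonneg q, pow_nonneg (norm_nonneg q) j]

lemma one_sub_qpow_norm (j : ℕ) : (2/5 : ℝ) ≤ ‖1 - q * q ^ j‖ := by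
  have h1 := norm_qpow_succ_le hr1 j
  have h2 : ‖(1:ℂ)‖ - ‖q * q ^ j‖ ≤ ‖1 - q * q ^ j‖ := norm_sub_norm_le _ _
  rw [norm_one] at h2
  linarith

lemma one_sub_qpow_ne (j : ℕ) : (1 : ℂ) - q * q ^ j ≠ 0 := by
  intro h
  have := one_sub_qpow_norm hr1 j
  rw [h, norm_zero] at this
  norm_num at this

lemma Qf_lower (j : ℕ) : (1/400 : ℝ) ≤ ‖qPF q q j‖ := by
  rw [qPF, norm_prod]
  have hsum : ∑ i ∈ Finset.range j, ‖q * q ^ i‖ ≤ 3/2 := by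
    have := sum_pow_le hr1 q j
    nlinarith [norm_nonneg q]
  calc (1/400 : ℝ) ≤ Real.exp (-(9/2)) := by
        rw [Real.exp_neg]
        rw [show (1/400 : ℝ) = 400⁻¹ by norm_num]
        apply inv_anti₀ (Real.exp_pos _) exp_nine_halves_le
    _ ≤ Real.exp (∑ i ∈ Finset.range j, -(3 * ‖q * q ^ i‖)) := by
        apply Real.exp_le_exp.mpr
        have he : ∑ i ∈ Finset.range j, -(3 * ‖q * q ^ i‖)
            = (-3) * ∑ i ∈ Finset.range j, ‖q * q ^ i‖ := by
          rw [Finset.mul_sum]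
          exact Finset.sum_congr rfl (fun i _ => by ring)
        rw [he]
        nlinarith
    _ = ∏ i ∈ Finset.range j, Real.exp (-(3 * ‖q * q ^ i‖)) := Real.exp_sum _ _
    _ ≤ ∏ i ∈ Finset.range j, ‖1 - q * q ^ i‖ := by
        apply Finset.prod_le_prod (fun i _ => (Real.exp_pos _).le)
        intro i _
        calc Real.exp (-(3 * ‖q * q ^ i‖)) ≤ 1 - ‖q * q ^ i‖ :=
              exp_neg_three_mul_le (norm_nonneg _) (norm_qpow_succ_le hr1 i)
          _ ≤ ‖1 - q * q ^ i‖ := by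
              have := norm_sub_norm_le (1:ℂ) (q * q ^ i)
              rw [norm_one] at this
              linarith

lemma Qf_pos (j : ℕ) : (0:ℝ) < ‖qPF q q j‖ := lt_of_lt_of_le (by norm_num) (Qf_lower hr1 j)

lemma Qf_ne_zero (j : ℕ) : qPF q q j ≠ 0 := by
  intro h
  have := Qf_pos hr1 j
  rw [h, norm_zero] at this
  exact lt_irrefl _ this

lemma div_Qf_le (y : ℂ) (j : ℕ) : ‖y / qPF q q j‖ ≤ ‖y‖ * 400 := by
  rw [norm_div]
  rw [div_le_iff₀ (Qf_pos hr1 j)]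
  calc ‖y‖ ≤ ‖y‖ * (400 * (1/400)) := by norm_num
    _ ≤ ‖y‖ * (400 * ‖qPF q q j‖) := by
        have := Qf_lower hr1 j
        have := norm_nonneg y
        nlinarith
    _ = ‖y‖ * 400 * ‖qPF q q j‖ := by ring

end Qfacts

/-- terms of the Euler-type series -/
def dV (t q : ℂ) (j : ℕ) : ℂ := ∏ i ∈ Finset.range j, (-(t * q ^ i))

/-- the Euler-type series -/
def SV (t q : ℂ) : ℂ := ∑' j : ℕ, dV t q j / qPF q q j

section Vpart

variable {q : ℂ} (hr1 : ‖q‖ ≤ 3/5)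

include hr1

lemma dV_succ (t : ℂ) (j : ℕ) : dV t q (j+1) = dV t q j * (-(t * q ^ j)) :=
  Finset.prod_range_succ _ _

omit hr1 in
lemma dV_qmul (t : ℂ) (m : ℕ) : dV (q*t) q m = (q^m) * dV t q m := by
  rw [dV, dV]
  have h : ∀ i ∈ Finset.range m, -((q*t) * q ^ i) = q * (-(t * q ^ i)) := by
    intro i _; ring
  rw [Finset.prod_congr rfl h, Finset.prod_mul_distrib, Finset.prod_const, Finset.card_range]

omit hr1 in
lemma dV_shift (t : ℂ) (j : ℕ) : dV t q (j+1) = (-t) * dV (q*t) q j := by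
  rw [dV, Finset.prod_range_succ' (fun k => -(t * q ^ k)) j, dV]
  have h : ∀ k ∈ Finset.range j, -(t * q ^ (k+1)) = -((q*t) * q ^ k) := by
    intro k _; rw [pow_succ']; ring
  rw [Finset.prod_congr rfl h, pow_zero, mul_one]
  ring

lemma sv_summable (t : ℂ) : Summable (fun j => dV t q j / qPF q q j) := by
  apply summable_of_ratio_norm_eventually_le (r := 1/2) (by norm_num)
  filter_upwards [eventually_small hr1 t (1/5) (by norm_num)] with j hj
  have he : dV t q (j+1) / qPF q q (j+1)
      = (dV t q j / qPF q q j) * (-(t * q ^ j) / (1 - q * q ^ j)) := by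
    rw [dV_succ hr1, qPF_succ hr1, div_mul_div_comm]
  rw [he, norm_mul]
  have hb : ‖-(t * q ^ j) / (1 - q * q ^ j)‖ ≤ 1/2 := by
    rw [norm_div, norm_neg, div_le_iff₀ (lt_of_lt_of_le (by norm_num) (one_sub_qpow_norm hr1 j))]
    have := one_sub_qpow_norm hr1 j
    nlinarith
  calc ‖dV t q j / qPF q q j‖ * ‖-(t * q ^ j) / (1 - q * q ^ j)‖
      ≤ ‖dV t q j / qPF q q j‖ * (1/2) := by
        exact mul_le_mul_of_nonneg_left hb (norm_nonneg _)
    _ = 1/2 * ‖dV t q j / qPF q q j‖ := by ring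

lemma FE_V (t : ℂ) : SV t q = (1 - t) * SV (q*t) q := by
  have hf := sv_summable hr1 t
  have hg := sv_summable hr1 (q*t)
  have h1 : SV t q - SV (q*t) q = ∑' j : ℕ, (dV t q j / qPF q q j - dV (q*t) q j / qPF q q j) :=
    (Summable.tsum_sub hf hg).symm
  have h3 : ∀ j : ℕ, dV t q (j+1) / qPF q q (j+1) - dV (q*t) q (j+1) / qPF q q (j+1)
      = -t * (dV (q*t) q j / qPF q q j) := by
    intro j
    rw [div_sub_div_same]
    have hnum : dV t q (j+1) - dV (q*t) q (j+1) = (dV t q (j+1)) * (1 - q * q ^ j) := by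
      rw [dV_qmul]
      rw [pow_succ']
      ring
    rw [hnum, qPF_succ hr1, mul_div_mul_right _ _ (one_sub_qpow_ne hr1 j)]
    rw [dV_shift]
    rw [mul_div_assoc]
  have h2 : ∑' j : ℕ, (dV t q j / qPF q q j - dV (q*t) q j / qPF q q j)
      = -t * SV (q*t) q := by
    rw [Summable.tsum_eq_zero_add (hf.sub hg)]
    have h0 : dV t q 0 / qPF q q 0 - dV (q*t) q 0 / qPF q q 0 = 0 := by
      simp [dV, qPF]
    rw [h0, zero_add]
    calc ∑' j : ℕ, (dV t q (j+1) / qPF q q (j+1) - dV (q*t) q (j+1) / qPF q q (j+1))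
        = ∑' j : ℕ, -t * (dV (q*t) q j / qPF q q j) := tsum_congr h3
      _ = -t * SV (q*t) q := by rw [tsum_mul_left]; rfl
  have := h1.trans h2
  linear_combination this

lemma V_cont (t : ℂ) (ht : ‖t‖ ≤ 1/10) : ‖SV t q - 1‖ ≤ 500 * ‖t‖ := by
  have hf := sv_summable hr1 t
  have h0 : dV t q 0 / qPF q q 0 = 1 := by simp [dV, qPF]
  have h1 : SV t q - 1 = ∑' j : ℕ, dV t q (j+1) / qPF q q (j+1) := by
    rw [SV, Summable.tsum_eq_zero_add hf, h0]
    ring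
  rw [h1]
  have hb : ∀ j : ℕ, ‖dV t q (j+1) / qPF q q (j+1)‖ ≤ (400 * ‖t‖) * (1/10)^j := by
    intro j
    calc ‖dV t q (j+1) / qPF q q (j+1)‖ ≤ ‖dV t q (j+1)‖ * 400 := div_Qf_le hr1 _ _
      _ ≤ (‖t‖ * (1/10)^j) * 400 := by
          apply mul_le_mul_of_nonneg_right _ (by norm_num)
          rw [dV, norm_prod, Finset.prod_range_succ' (fun i => ‖-(t * q ^ i)‖) j]
          have hfac : ∀ i : ℕ, ‖-(t * q ^ i)‖ ≤ ‖t‖ := by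
            intro i
            rw [norm_neg, norm_mul, norm_pow]
            have h2 : ‖q‖ ^ i ≤ 1 := pow_le_one₀ (norm_nonneg q) (le_trans hr1 (by norm_num))
            nlinarith [norm_nonneg t, pow_nonneg (norm_nonneg q) i]
          have h0 : ‖-(t * q ^ 0)‖ ≤ ‖t‖ := hfac 0
          have hrest : ∏ i ∈ Finset.range j, ‖-(t * q ^ (i+1))‖ ≤ (1/10 : ℝ)^j := by
            calc ∏ i ∈ Finset.range j, ‖-(t * q ^ (i+1))‖
                ≤ ∏ _i ∈ Finset.range j, (1/10 : ℝ) := by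
                  apply Finset.prod_le_prod (fun i _ => norm_nonneg _)
                  intro i _
                  exact le_trans (hfac (i+1)) ht
              _ = (1/10 : ℝ)^j := by rw [Finset.prod_const, Finset.card_range]
          calc (∏ i ∈ Finset.range j, ‖-(t * q ^ (i+1))‖) * ‖-(t * q ^ 0)‖
              ≤ (1/10 : ℝ)^j * ‖t‖ := by
                apply mul_le_mul hrest h0 (norm_nonneg _)
                positivity
            _ = ‖t‖ * (1/10)^j := by ring
      _ = (400 * ‖t‖) * (1/10)^j := by ring
  have hs : HasSum (fun j : ℕ => (400 * ‖t‖) * (1/10 : ℝ)^j) ((400 * ‖t‖) * (1 - 1/10)⁻¹) :=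
    (hasSum_geometric_of_lt_one (by norm_num) (by norm_num)).mul_left _
  calc ‖∑' j : ℕ, dV t q (j+1) / qPF q q (j+1)‖ ≤ (400 * ‖t‖) * (1 - 1/10 : ℝ)⁻¹ :=
        tsum_of_norm_bounded hs hb
    _ ≤ 500 * ‖t‖ := by nlinarith [norm_nonneg t]


lemma tendsto_SV_one (t : ℂ) : Tendsto (fun N : ℕ => SV (q^N * t) q) atTop (𝓝 1) := by
  have hq1 : ‖q‖ < 1 := lt_of_le_of_lt hr1 (by norm_num)
  have h0 : Tendsto (fun N : ℕ => SV (q^N * t) q - 1) atTop (𝓝 0) := by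
    apply squeeze_zero_norm' (a := fun N : ℕ => 500 * (‖t‖ * ‖q‖^N))
    · have hsm : ∀ᶠ N : ℕ in atTop, ‖q^N * t‖ ≤ 1/10 := by
        filter_upwards [eventually_small hr1 t (1/10) (by norm_num)] with N hN
        rw [mul_comm]; exact hN
      filter_upwards [hsm] with N hN
      calc ‖SV (q^N * t) q - 1‖ ≤ 500 * ‖q^N * t‖ := V_cont hr1 _ hN
        _ = 500 * (‖t‖ * ‖q‖^N) := by rw [norm_mul, norm_pow]; ring
    · have : Tendsto (fun N : ℕ => ‖q‖^N) atTop (𝓝 0) :=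
        tendsto_pow_atTop_nhds_zero_of_lt_one (norm_nonneg q) hq1
      have h2 := (this.const_mul (500 * ‖t‖))
      simp only [mul_zero] at h2
      apply h2.congr
      intro N; ring
  have := h0.add (tendsto_const_nhds (x := (1:ℂ)))
  simp only [zero_add] at this
  apply this.congr
  intro N; ring

lemma V_eq (t : ℂ) : SV t q = qPI t q := by
  have hiter : ∀ N : ℕ, SV t q = qPF t q N * SV (q^N * t) q := by
    intro N
    induction N with
    | zero => simp [qPF]
    | succ N ih =>
      have hfe := FE_V hr1 (q^N * t)
      have harg : q * (q^N * t) = q^(N+1) * t := by rw [pow_succ]; ring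
      rw [harg] at hfe
      rw [ih, hfe, qPF_succ hr1]
      ring
  have h1 : Tendsto (fun N : ℕ => qPF t q N * SV (q^N * t) q) atTop (𝓝 (qPI t q * 1)) :=
    (tendsto_qPF hr1 t).mul (tendsto_SV_one hr1 t)
  have h2 : Tendsto (fun _ : ℕ => SV t q) atTop (𝓝 (SV t q)) := tendsto_const_nhds
  have h3 := tendsto_nhds_unique (h2.congr hiter) h1
  rw [h3, mul_one]

end Vpart

/-- terms of the U-series -/
def dU (a q : ℂ) (j : ℕ) : ℂ := ∏ i ∈ Finset.range j, (a - q ^ (i+1))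

/-- the U-series -/
def SU (a q : ℂ) : ℂ := ∑' j : ℕ, dU a q j / qPF q q j

section Upart

variable {q : ℂ} (hr1 : ‖q‖ ≤ 3/5)

omit hr1 in
lemma dU_succ (a : ℂ) (j : ℕ) : dU a q (j+1) = dU a q j * (a - q ^ (j+1)) :=
  Finset.prod_range_succ _ _

omit hr1 in
lemma dU_qmul_shift (a : ℂ) (j : ℕ) :
    dU (q*a) q (j+1) = (q * q ^ j) * ((a - 1) * dU a q j) := by
  rw [dU]
  have h : ∀ i ∈ Finset.range (j+1), (q*a - q ^ (i+1)) = q * (a - q ^ i) := by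
    intro i _; rw [pow_succ']; ring
  rw [Finset.prod_congr rfl h, Finset.prod_mul_distrib, Finset.prod_const, Finset.card_range]
  rw [Finset.prod_range_succ' (fun i => a - q ^ i) j]
  rw [dU, pow_zero, pow_succ']
  ring

include hr1

lemma su_summable (a : ℂ) (ha : ‖a‖ < 1) : Summable (fun j => dU a q j / qPF q q j) := by
  set κ : ℝ := (2*‖a‖+1)/(‖a‖+2) with hκdef
  have hden : (0:ℝ) < ‖a‖ + 2 := by positivity
  have hκ1 : κ < 1 := by
    rw [hκdef, div_lt_one hden]
    linarith
  have hκmul : κ * (‖a‖+2) = 2*‖a‖+1 := by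
    rw [hκdef]; field_simp
  apply summable_of_ratio_norm_eventually_le hκ1
  filter_upwards [eventually_small hr1 q ((1-‖a‖)/3) (by linarith)] with j hj
  have he : dU a q (j+1) / qPF q q (j+1)
      = (dU a q j / qPF q q j) * ((a - q * q ^ j) / (1 - q * q ^ j)) := by
    rw [dU_succ, qPF_succ hr1, div_mul_div_comm, pow_succ']
  rw [he, norm_mul]
  have hb : ‖(a - q * q ^ j) / (1 - q * q ^ j)‖ ≤ κ := by
    rw [norm_div, div_le_iff₀ (lt_of_lt_of_le (by norm_num) (one_sub_qpow_norm hr1 j))]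
    have h1 : ‖a - q * q ^ j‖ ≤ ‖a‖ + ‖q * q ^ j‖ := norm_sub_le _ _
    have h2 : 1 - ‖q * q ^ j‖ ≤ ‖1 - q * q ^ j‖ := by
      have := norm_sub_norm_le (1:ℂ) (q * q ^ j)
      rw [norm_one] at this; linarith
    have h3 : ‖q * q ^ j‖ ≤ (1-‖a‖)/3 := hj
    have h4 : (0:ℝ) ≤ ‖q * q ^ j‖ := norm_nonneg _
    have h5 : (0:ℝ) ≤ κ := by positivity
    nlinarith
  calc ‖dU a q j / qPF q q j‖ * ‖(a - q * q ^ j) / (1 - q * q ^ j)‖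
      ≤ ‖dU a q j / qPF q q j‖ * κ := mul_le_mul_of_nonneg_left hb (norm_nonneg _)
    _ = κ * ‖dU a q j / qPF q q j‖ := by ring

lemma FE_U (a : ℂ) (ha : ‖a‖ < 1) : SU (q*a) q = (1 - a) * SU a q := by
  have hqa : ‖q*a‖ < 1 := by
    rw [norm_mul]
    nlinarith [norm_nonneg q, norm_nonneg a]
  have hf := su_summable hr1 a ha
  have hg := su_summable hr1 (q*a) hqa
  have h1 : SU a q - SU (q*a) q
      = ∑' j : ℕ, (dU a q j / qPF q q j - dU (q*a) q j / qPF q q j) := (Summable.tsum_sub hf hg).symm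
  have h3 : ∀ j : ℕ, dU a q (j+1) / qPF q q (j+1) - dU (q*a) q (j+1) / qPF q q (j+1)
      = a * (dU a q j / qPF q q j) := by
    intro j
    rw [div_sub_div_same]
    have hnum : dU a q (j+1) - dU (q*a) q (j+1) = (a * dU a q j) * (1 - q * q ^ j) := by
      rw [dU_succ, dU_qmul_shift, pow_succ']
      ring
    rw [hnum, qPF_succ hr1, mul_div_mul_right _ _ (one_sub_qpow_ne hr1 j)]
    rw [mul_div_assoc]
  have h2 : ∑' j : ℕ, (dU a q j / qPF q q j - dU (q*a) q j / qPF q q j) = a * SU a q := by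
    rw [Summable.tsum_eq_zero_add (hf.sub hg)]
    have h0 : dU a q 0 / qPF q q 0 - dU (q*a) q 0 / qPF q q 0 = 0 := by simp [dU, qPF]
    rw [h0, zero_add]
    calc ∑' j : ℕ, (dU a q (j+1) / qPF q q (j+1) - dU (q*a) q (j+1) / qPF q q (j+1))
        = ∑' j : ℕ, a * (dU a q j / qPF q q j) := tsum_congr h3
      _ = a * SU a q := by rw [tsum_mul_left]; rfl
  have := h1.trans h2
  linear_combination -this

omit hr1 in
lemma SU_zero : SU 0 q = SV q q := by
  rw [SU, SV]
  apply tsum_congr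
  intro j
  congr 1
  rw [dU, dV]
  apply Finset.prod_congr rfl
  intro i _
  rw [pow_succ']
  ring

omit hr1 in
lemma pow_aux (j : ℕ) : ((7:ℝ)/10)^(j-1) ≤ (10/7) * (7/10)^j := by
  rcases j with _ | m
  · norm_num
  · have : (m + 1 : ℕ) - 1 = m := rfl
    rw [this, pow_succ]
    have h : (0:ℝ) ≤ (7/10:ℝ)^m := by positivity
    nlinarith

lemma U_cont (w : ℂ) (hw : ‖w‖ ≤ 1/10) : ‖SU w q - SU 0 q‖ ≤ 4800 * ‖w‖ := by
  have hw1 : ‖w‖ < 1 := by linarith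
  have h01 : ‖(0:ℂ)‖ < 1 := by norm_num
  have hf := su_summable hr1 w hw1
  have hg := su_summable hr1 0 h01
  have h1 : SU w q - SU 0 q
      = ∑' j : ℕ, (dU w q j / qPF q q j - dU 0 q j / qPF q q j) := (Summable.tsum_sub hf hg).symm
  rw [h1]
  have hdiff : ∀ j : ℕ, ‖dU w q j - dU 0 q j‖ ≤ (j * ‖w‖) * (7/10)^(j-1) := by
    intro j
    have hqp : ∀ i : ℕ, ‖q ^ (i+1)‖ ≤ 3/5 := by
      intro i
      rw [norm_pow]
      calc ‖q‖^(i+1) ≤ ‖q‖ := pow_le_of_le_one (norm_nonneg q)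
            (le_trans hr1 (by norm_num)) (Nat.succ_ne_zero i)
        _ ≤ 3/5 := hr1
    have := prod_diff_bound (fun i => w - q ^ (i+1)) (fun i => 0 - q ^ (i+1)) (7/10)
      (by norm_num)
      (fun i => by
        calc ‖w - q ^ (i+1)‖ ≤ ‖w‖ + ‖q ^ (i+1)‖ := norm_sub_le _ _
          _ ≤ 7/10 := by linarith [hqp i])
      (fun i => by
        calc ‖(0:ℂ) - q ^ (i+1)‖ = ‖q ^ (i+1)‖ := by rw [zero_sub, norm_neg]
          _ ≤ 7/10 := by linarith [hqp i])
      j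
    rw [dU, dU]
    refine le_trans this ?_
    have hsum : ∑ i ∈ Finset.range j, ‖(w - q ^ (i+1)) - (0 - q ^ (i+1))‖ = j * ‖w‖ := by
      have : ∀ i ∈ Finset.range j, ‖(w - q ^ (i+1)) - (0 - q ^ (i+1))‖ = ‖w‖ := by
        intro i _
        congr 1
        ring
      rw [Finset.sum_congr rfl this, Finset.sum_const, Finset.card_range, nsmul_eq_mul]
    rw [hsum]
  have hb : ∀ j : ℕ, ‖dU w q j / qPF q q j - dU 0 q j / qPF q q j‖
      ≤ (600 * ‖w‖) * (j * (7/10)^j) := by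
    intro j
    rw [div_sub_div_same]
    calc ‖(dU w q j - dU 0 q j) / qPF q q j‖ ≤ ‖dU w q j - dU 0 q j‖ * 400 :=
          div_Qf_le hr1 _ _
      _ ≤ ((j * ‖w‖) * (7/10)^(j-1)) * 400 := by
          apply mul_le_mul_of_nonneg_right (hdiff j) (by norm_num)
      _ ≤ (600 * ‖w‖) * (j * (7/10)^j) := by
          have h4 := pow_aux j
          have h5 : (0:ℝ) ≤ j * ‖w‖ := by positivity
          have h6 : (0:ℝ) ≤ (7/10:ℝ)^(j-1) := by positivity
          have h7 : (0:ℝ) ≤ (7/10:ℝ)^j := by positivity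
          nlinarith [mul_le_mul_of_nonneg_left h4 h5]
  have hsummable : Summable (fun j : ℕ => (j : ℝ) * (7/10)^j) := by
    have := summable_pow_mul_geometric_of_norm_lt_one (R := ℝ) 1 (r := 7/10)
      (by rw [Real.norm_eq_abs]; rw [_root_.abs_of_nonneg (by norm_num : (0:ℝ) ≤ 7/10)]; norm_num)
    apply this.congr
    intro n
    rw [pow_one]
  have htsumval : ∑' j : ℕ, (j : ℝ) * (7/10)^j = (7/10) / (1 - 7/10)^2 := by
    have := tsum_coe_mul_geometric_of_norm_lt_one (𝕜 := ℝ) (r := 7/10)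
      (by rw [Real.norm_eq_abs]; rw [_root_.abs_of_nonneg (by norm_num : (0:ℝ) ≤ 7/10)]; norm_num)
    exact this
  have hs : HasSum (fun j : ℕ => (600 * ‖w‖) * ((j : ℝ) * (7/10)^j))
      ((600 * ‖w‖) * ((7/10) / (1 - 7/10)^2)) := by
    have := hsummable.hasSum
    rw [htsumval] at this
    exact this.mul_left _
  calc ‖∑' j : ℕ, (dU w q j / qPF q q j - dU 0 q j / qPF q q j)‖
      ≤ (600 * ‖w‖) * ((7/10) / (1 - 7/10 : ℝ)^2) := tsum_of_norm_bounded hs hb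
    _ ≤ 4800 * ‖w‖ := by nlinarith [norm_nonneg w]

lemma tendsto_qPI_one (t : ℂ) : Tendsto (fun N : ℕ => qPI (q^N * t) q) atTop (𝓝 1) := by
  have hq1 : ‖q‖ < 1 := lt_of_le_of_lt hr1 (by norm_num)
  have h0 : Tendsto (fun N : ℕ => qPI (q^N * t) q - 1) atTop (𝓝 0) := by
    apply squeeze_zero_norm' (a := fun N : ℕ => 6 * (‖t‖ * ‖q‖^N))
    · have hsm : ∀ᶠ N : ℕ in atTop, ‖q^N * t‖ ≤ 1/10 := by
        filter_upwards [eventually_small hr1 t (1/10) (by norm_num)] with N hN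
        rw [mul_comm]; exact hN
      filter_upwards [hsm] with N hN
      calc ‖qPI (q^N * t) q - 1‖ ≤ 6 * ‖q^N * t‖ := qPI_near_one hr1 _ hN
        _ = 6 * (‖t‖ * ‖q‖^N) := by rw [norm_mul, norm_pow]; ring
    · have h2 := ((tendsto_pow_atTop_nhds_zero_of_lt_one (norm_nonneg q) hq1).const_mul
        (6 * ‖t‖))
      simp only [mul_zero] at h2
      apply h2.congr
      intro N; ring
  have := h0.add (tendsto_const_nhds (x := (1:ℂ)))
  simp only [zero_add] at this
  apply this.congr
  intro N; ring

lemma tendsto_SU (t : ℂ) : Tendsto (fun N : ℕ => SU (q^N * t) q) atTop (𝓝 (SU 0 q)) := by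
  have hq1 : ‖q‖ < 1 := lt_of_le_of_lt hr1 (by norm_num)
  have h0 : Tendsto (fun N : ℕ => SU (q^N * t) q - SU 0 q) atTop (𝓝 0) := by
    apply squeeze_zero_norm' (a := fun N : ℕ => 4800 * (‖t‖ * ‖q‖^N))
    · have hsm : ∀ᶠ N : ℕ in atTop, ‖q^N * t‖ ≤ 1/10 := by
        filter_upwards [eventually_small hr1 t (1/10) (by norm_num)] with N hN
        rw [mul_comm]; exact hN
      filter_upwards [hsm] with N hN
      calc ‖SU (q^N * t) q - SU 0 q‖ ≤ 4800 * ‖q^N * t‖ := U_cont hr1 _ hN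
        _ = 4800 * (‖t‖ * ‖q‖^N) := by rw [norm_mul, norm_pow]; ring
    · have h2 := ((tendsto_pow_atTop_nhds_zero_of_lt_one (norm_nonneg q) hq1).const_mul
        (4800 * ‖t‖))
      simp only [mul_zero] at h2
      apply h2.congr
      intro N; ring
  have := h0.add (tendsto_const_nhds (x := SU 0 q))
  simp only [zero_add] at this
  apply this.congr
  intro N; ring

lemma U_limit (a : ℂ) (ha : ‖a‖ < 1) : qPI a q * SU a q = qPI q q := by
  have hq1 : ‖q‖ ≤ 1 := le_trans hr1 (by norm_num)
  have hpow : ∀ n : ℕ, ‖q^n * a‖ < 1 := by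
    intro n
    rw [norm_mul, norm_pow]
    have h1 : ‖q‖^n ≤ 1 := pow_le_one₀ (norm_nonneg q) hq1
    nlinarith [norm_nonneg a, pow_nonneg (norm_nonneg q) n]
  have hiter : ∀ n : ℕ, qPI a q * SU a q = qPI (q^n * a) q * SU (q^n * a) q := by
    intro n
    induction n with
    | zero => simp
    | succ n ih =>
      rw [ih]
      have hfe := FE_U hr1 (q^n * a) (hpow n)
      have harg : q * (q^n * a) = q^(n+1) * a := by rw [pow_succ]; ring
      rw [harg] at hfe
      have hfac := qPI_factor hr1 (q^n * a)
      have harg2 : (q^n * a) * q = q^(n+1) * a := by rw [pow_succ]; ring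
      rw [harg2] at hfac
      rw [hfac, hfe]
      ring
  have h1 : Tendsto (fun n : ℕ => qPI (q^n * a) q * SU (q^n * a) q) atTop
      (𝓝 (1 * SU 0 q)) := (tendsto_qPI_one hr1 a).mul (tendsto_SU hr1 a)
  have h2 := tendsto_nhds_unique ((tendsto_const_nhds (x := qPI a q * SU a q)).congr hiter) h1
  rw [h2, one_mul, SU_zero, V_eq hr1]

end Upart

/-- the Mittag-Leffler coefficients -/
def cjj (a q : ℂ) (j : ℕ) : ℂ := qPI (a * q ^ (-(j:ℤ))) q / qPF (q ^ (-(j:ℤ))) q j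

section Cpart

variable {q : ℂ} (hr1 : ‖q‖ ≤ 3/5) (hq0 : q ≠ 0)

include hq0 in
lemma zpow_cancel (j : ℕ) : q ^ (-(j:ℤ)) * q ^ j = 1 := by
  rw [← zpow_natCast q j, ← zpow_add₀ hq0, neg_add_cancel, zpow_zero]

include hr1 hq0 in
lemma qpow_inv_ne_one {i j : ℕ} (hij : i < j) : q ^ (-(j:ℤ)) * q ^ i ≠ 1 := by
  intro h
  have h2 : q ^ i = q ^ j := by
    have h5 := congrArg (· * q ^ j) h
    simp only [one_mul] at h5
    rw [mul_comm (q ^ (-(j:ℤ))) (q ^ i), mul_assoc, zpow_cancel hq0 j, mul_one] at h5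
    exact h5
  have h3 : ‖q‖ ^ i = ‖q‖ ^ j := by rw [← norm_pow, ← norm_pow, h2]
  have h4 : 0 < ‖q‖ := norm_pos_iff.mpr hq0
  have h5 : ‖q‖ < 1 := lt_of_le_of_lt hr1 (by norm_num)
  have h6 := pow_lt_pow_right_of_lt_one₀ h4 h5 hij
  rw [h3] at h6
  exact lt_irrefl _ h6

include hr1 hq0 in
lemma qPF_inv_ne_zero (j : ℕ) : qPF (q ^ (-(j:ℤ))) q j ≠ 0 := by
  rw [qPF, Finset.prod_ne_zero_iff]
  intro i hi
  exact sub_ne_zero.mpr (Ne.symm (qpow_inv_ne_one hr1 hq0 (Finset.mem_range.mp hi)))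

include hq0 in
lemma key_prod (a : ℂ) (j : ℕ) :
    qPF (a * q ^ (-(j:ℤ))) q j * qPF q q j = dU a q j * qPF (q ^ (-(j:ℤ))) q j := by
  rw [qPF, qPF, qPF, dU]
  rw [← Finset.prod_range_reflect (fun i => 1 - q * q ^ i) j]
  rw [← Finset.prod_range_reflect (fun i => a - q ^ (i+1)) j]
  rw [← Finset.prod_mul_distrib, ← Finset.prod_mul_distrib]
  apply Finset.prod_congr rfl
  intro i hi
  have hij : i < j := Finset.mem_range.mp hi
  have hw : (q ^ (-(j:ℤ)) * q ^ i) * q ^ (j-i) = 1 := by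
    rw [mul_assoc, ← pow_add]
    have he : i + (j - i) = j := by omega
    rw [he]
    exact zpow_cancel hq0 j
  have hq2 : q * q ^ (j-1-i) = q ^ (j-i) := by
    rw [← pow_succ']
    congr 1
    omega
  have hq3 : q ^ ((j-1-i)+1) = q ^ (j-i) := by
    congr 1
    omega
  rw [hq2, hq3]
  have hmul : a * q ^ (-(j:ℤ)) * q ^ i = a * (q ^ (-(j:ℤ)) * q ^ i) := by ring
  rw [hmul]
  linear_combination (a - 1) * hw

include hr1 hq0 in
lemma cj_eq (a : ℂ) (j : ℕ) : cjj a q j = qPI a q * (dU a q j / qPF q q j) := by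
  have hy : a * q ^ (-(j:ℤ)) * q ^ j = a := by
    rw [mul_assoc, zpow_cancel hq0 j, mul_one]
  have hsplit := qPI_split hr1 (a * q ^ (-(j:ℤ))) j
  rw [hy] at hsplit
  rw [cjj, hsplit]
  have hkey := key_prod hq0 a j
  have h1 : qPF (q ^ (-(j:ℤ))) q j ≠ 0 := qPF_inv_ne_zero hr1 hq0 j
  have h2 : qPF q q j ≠ 0 := Qf_ne_zero hr1 j
  rw [← mul_div_assoc, div_eq_div_iff h1 h2]
  linear_combination qPI a q * hkey

include hr1 hq0 in
lemma cj_rec (a : ℂ) (j : ℕ) :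
    cjj a q (j+1) * (q ^ (j+1) - 1) = cjj a q j * (q ^ (j+1) - a) := by
  rw [cj_eq hr1 hq0 a (j+1), cj_eq hr1 hq0 a j, dU_succ, qPF_succ hr1]
  have hu : q * q ^ j ≠ 0 := mul_ne_zero hq0 (pow_ne_zero _ hq0)
  have h1 : (1:ℂ) - q * q ^ j ≠ 0 := one_sub_qpow_ne hr1 j
  have h2 : qPF q q j ≠ 0 := Qf_ne_zero hr1 j
  have hp : q ^ (j+1) = q * q ^ j := pow_succ' q j
  rw [hp]
  field_simp
  ring

include hr1 in
lemma dU_bound (a : ℂ) (ha : ‖a‖ < 1) (j : ℕ) :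
    ‖dU a q j‖ ≤ 40 * ((3+‖a‖)/4)^j := by
  set ρ : ℝ := (3+‖a‖)/4 with hρ
  have hρ34 : (3:ℝ)/4 ≤ ρ := by rw [hρ]; nlinarith [norm_nonneg a]
  have haρ : ‖a‖ ≤ ρ := by rw [hρ]; nlinarith
  rw [dU, norm_prod]
  have hpt : ∀ i ∈ Finset.range j, ‖a - q ^ (i+1)‖ ≤ ρ * Real.exp (2 * ‖q * q ^ i‖) := by
    intro i _
    have hs : ‖q ^ (i+1)‖ = ‖q * q ^ i‖ := by rw [pow_succ']
    have h1 : ‖a - q ^ (i+1)‖ ≤ ‖a‖ + ‖q * q ^ i‖ := by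
      rw [← hs]; exact norm_sub_le _ _
    have h2 : 1 + 2 * ‖q * q ^ i‖ ≤ Real.exp (2 * ‖q * q ^ i‖) := by
      have := Real.add_one_le_exp (2 * ‖q * q ^ i‖)
      linarith
    have h3 : (0:ℝ) ≤ ‖q * q ^ i‖ := norm_nonneg _
    nlinarith
  calc ∏ i ∈ Finset.range j, ‖a - q ^ (i+1)‖
      ≤ ∏ i ∈ Finset.range j, (ρ * Real.exp (2 * ‖q * q ^ i‖)) :=
        Finset.prod_le_prod (fun i _ => norm_nonneg _) hpt
    _ = ρ^j * Real.exp (∑ i ∈ Finset.range j, 2 * ‖q * q ^ i‖) := by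
        rw [Finset.prod_mul_distrib, Finset.prod_const, Finset.card_range, Real.exp_sum]
    _ ≤ 40 * ρ^j := by
        have hsum : ∑ i ∈ Finset.range j, 2 * ‖q * q ^ i‖ ≤ 3 := by
          have h5 := sum_pow_le hr1 q j
          have h6 : ∑ i ∈ Finset.range j, 2 * ‖q * q ^ i‖
              = 2 * ∑ i ∈ Finset.range j, ‖q * q ^ i‖ := by
            rw [Finset.mul_sum]
          rw [h6]
          nlinarith [norm_nonneg q]
        have h7 : Real.exp (∑ i ∈ Finset.range j, 2 * ‖q * q ^ i‖) ≤ 40 :=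
          le_trans (Real.exp_le_exp.mpr hsum) exp_three_le
        have h8 : (0:ℝ) ≤ ρ^j := by positivity
        nlinarith [Real.exp_pos (∑ i ∈ Finset.range j, 2 * ‖q * q ^ i‖)]

include hr1 hq0 in
lemma cj_bound (a : ℂ) (ha : ‖a‖ < 1) (j : ℕ) :
    ‖cjj a q j‖ ≤ (16000 * ‖qPI a q‖) * ((3+‖a‖)/4)^j := by
  rw [cj_eq hr1 hq0 a j, norm_mul]
  calc ‖qPI a q‖ * ‖dU a q j / qPF q q j‖
      ≤ ‖qPI a q‖ * (‖dU a q j‖ * 400) := by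
        exact mul_le_mul_of_nonneg_left (div_Qf_le hr1 _ _) (norm_nonneg _)
    _ ≤ ‖qPI a q‖ * ((40 * ((3+‖a‖)/4)^j) * 400) := by
        apply mul_le_mul_of_nonneg_left _ (norm_nonneg _)
        apply mul_le_mul_of_nonneg_right (dU_bound hr1 a ha j) (by norm_num)
    _ = (16000 * ‖qPI a q‖) * ((3+‖a‖)/4)^j := by ring

include hr1 hq0 in
lemma summable_cjj (a : ℂ) (ha : ‖a‖ < 1) : Summable (cjj a q) := by
  apply Summable.of_norm
  apply Summable.of_nonneg_of_le (fun j => norm_nonneg _) (cj_bound hr1 hq0 a ha)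
  apply Summable.mul_left
  apply summable_geometric_of_lt_one (by positivity)
  nlinarith [norm_nonneg a]

include hr1 hq0 in
lemma S_eq (a : ℂ) (ha : ‖a‖ < 1) : ∑' j : ℕ, cjj a q j = qPI q q := by
  calc ∑' j : ℕ, cjj a q j = ∑' j : ℕ, qPI a q * (dU a q j / qPF q q j) :=
        tsum_congr (cj_eq hr1 hq0 a)
    _ = qPI a q * SU a q := by rw [tsum_mul_left]; rfl
    _ = qPI q q := U_limit hr1 a ha

end Cpart

/-- the candidate Mittag-Leffler sum -/
def Gm (a q z : ℂ) : ℂ :=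
  1 + (1 / qPI q q) * ∑' j : ℕ, cjj a q j * (z * q ^ j / (1 - z * q ^ j))

section Gpart

variable {a q : ℂ} (hr1 : ‖q‖ ≤ 3/5) (hq0 : q ≠ 0) (ha : ‖a‖ < 1)

omit hr1 hq0 ha in
lemma one_sub_ne (z : ℂ) (hz : ∀ j : ℕ, z * q ^ j ≠ 1) (j : ℕ) : (1:ℂ) - z * q ^ j ≠ 0 :=
  sub_ne_zero.mpr (Ne.symm (hz j))

include hr1 in
omit hq0 ha in
lemma inv_bound (z : ℂ) : ∃ D : ℝ, 0 ≤ D ∧ ∀ j : ℕ, ‖(1 - z * q ^ j)⁻¹‖ ≤ D := by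
  have hq1 : ‖q‖ < 1 := lt_of_le_of_lt hr1 (by norm_num)
  have h2 : Tendsto (fun j : ℕ => z * q ^ j) atTop (𝓝 0) := by
    simpa using (tendsto_pow_atTop_nhds_zero_of_norm_lt_one hq1).const_mul z
  have h3 : Tendsto (fun j : ℕ => (1:ℂ) - z * q ^ j) atTop (𝓝 1) := by
    have h3' : Tendsto (fun j : ℕ => (1:ℂ) - z * q ^ j) atTop (𝓝 (1 - 0)) :=
      Tendsto.sub tendsto_const_nhds h2
    simpa using h3'
  have h4 : Tendsto (fun j : ℕ => (1 - z * q ^ j)⁻¹) atTop (𝓝 1) := by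
    simpa using h3.inv₀ one_ne_zero
  have h5 : BddAbove (Set.range fun j : ℕ => ‖(1 - z * q ^ j)⁻¹‖) :=
    h4.norm.bddAbove_range
  obtain ⟨D, hD⟩ := h5
  exact ⟨max D 0, le_max_right _ _,
    fun j => le_trans (hD (Set.mem_range_self j)) (le_max_left _ _)⟩

include hr1 hq0 ha in
lemma summable_main (z : ℂ) (hz : ∀ j : ℕ, z * q ^ j ≠ 1) :
    Summable (fun j : ℕ => ‖cjj a q j * (z * q ^ j / (1 - z * q ^ j))‖) := by
  obtain ⟨D, hD0, hD⟩ := inv_bound hr1 z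
  set ρ : ℝ := (3+‖a‖)/4 with hρ
  have hρ1 : ρ < 1 := by rw [hρ]; nlinarith
  have hρ0 : (0:ℝ) ≤ ρ := by rw [hρ]; positivity
  refine Summable.of_nonneg_of_le (fun j => norm_nonneg _) (fun j => ?_)
    ((summable_geometric_of_lt_one hρ0 hρ1).mul_left ((16000 * ‖qPI a q‖) * (‖z‖ * D)))
  · 
    rw [norm_mul, div_eq_mul_inv, norm_mul]
    have h1 : ‖z * q ^ j‖ ≤ ‖z‖ := by
      rw [norm_mul, norm_pow]
      have : ‖q‖^j ≤ 1 := pow_le_one₀ (norm_nonneg q) (le_trans hr1 (by norm_num))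
      nlinarith [norm_nonneg z, pow_nonneg (norm_nonneg q) j]
    calc ‖cjj a q j‖ * (‖z * q ^ j‖ * ‖(1 - z * q ^ j)⁻¹‖)
        ≤ ((16000 * ‖qPI a q‖) * ρ^j) * (‖z‖ * D) := by
          apply mul_le_mul (cj_bound hr1 hq0 a ha j)
          · exact mul_le_mul h1 (hD j) (norm_nonneg _) (norm_nonneg z)
          · positivity
          · positivity
      _ = ((16000 * ‖qPI a q‖) * (‖z‖ * D)) * ρ^j := by ring

include hr1 hq0 ha in
lemma summable_h (z : ℂ) (hz : ∀ j : ℕ, z * q ^ j ≠ 1) :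
    Summable (fun j : ℕ => cjj a q j * ((z * q ^ j - z) / (1 - z * q ^ j))) := by
  obtain ⟨D, hD0, hD⟩ := inv_bound hr1 z
  set ρ : ℝ := (3+‖a‖)/4 with hρ
  have hρ1 : ρ < 1 := by rw [hρ]; nlinarith
  have hρ0 : (0:ℝ) ≤ ρ := by rw [hρ]; positivity
  apply Summable.of_norm
  refine Summable.of_nonneg_of_le (fun j => norm_nonneg _) (fun j => ?_)
    ((summable_geometric_of_lt_one hρ0 hρ1).mul_left ((16000 * ‖qPI a q‖) * ((2*‖z‖) * D)))
  · 
    rw [norm_mul, div_eq_mul_inv, norm_mul]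
    have h1 : ‖z * q ^ j - z‖ ≤ 2 * ‖z‖ := by
      have h2 : ‖z * q ^ j‖ ≤ ‖z‖ := by
        rw [norm_mul, norm_pow]
        have : ‖q‖^j ≤ 1 := pow_le_one₀ (norm_nonneg q) (le_trans hr1 (by norm_num))
        nlinarith [norm_nonneg z, pow_nonneg (norm_nonneg q) j]
      calc ‖z * q ^ j - z‖ ≤ ‖z * q ^ j‖ + ‖z‖ := norm_sub_le _ _
        _ ≤ 2 * ‖z‖ := by linarith
    calc ‖cjj a q j‖ * (‖z * q ^ j - z‖ * ‖(1 - z * q ^ j)⁻¹‖)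
        ≤ ((16000 * ‖qPI a q‖) * ρ^j) * ((2*‖z‖) * D) := by
          apply mul_le_mul (cj_bound hr1 hq0 a ha j)
          · exact mul_le_mul h1 (hD j) (norm_nonneg _) (by positivity)
          · positivity
          · positivity
      _ = ((16000 * ‖qPI a q‖) * ((2*‖z‖) * D)) * ρ^j := by ring

include hr1 hq0 ha in
lemma qPIq_ne_zero' : qPI q q ≠ 0 := by
  apply qPI_ne_zero hr1
  intro i h
  exact (one_sub_qpow_ne hr1 i) (by rw [h]; ring)

include hr1 hq0 ha in
lemma FE_G (z : ℂ) (hz : ∀ j : ℕ, z * q ^ j ≠ 1) :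
    (1 - z) * Gm a q z = (1 - a*z) * Gm a q (q*z) := by
  have hz' : ∀ j : ℕ, (q*z) * q ^ j ≠ 1 := by
    intro j
    have h := hz (j+1)
    intro hcon
    apply h
    rw [← hcon, pow_succ']
    ring
  set K : ℂ := 1 / qPI q q with hK
  set h : ℕ → ℂ := fun j => cjj a q j * ((z * q ^ j - z) / (1 - z * q ^ j)) with hh
  have hsum_h : Summable h := summable_h hr1 hq0 ha z hz
  have hsum_T0 : Summable (fun j : ℕ => cjj a q j * (z * q ^ j / (1 - z * q ^ j))) :=
    (summable_main hr1 hq0 ha z hz).of_norm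
  have hsum_c : Summable (cjj a q) := summable_cjj hr1 hq0 a ha
  have hQ : qPI q q ≠ 0 := qPIq_ne_zero' hr1 hq0 ha
  have hKS : K * (∑' j : ℕ, cjj a q j) = 1 := by
    rw [S_eq hr1 hq0 a ha, hK]
    field_simp
  have hshift : ∀ j : ℕ, (q*z) * q ^ j = z * q ^ (j+1) := by
    intro j; rw [pow_succ']; ring
  -- Key2
  have Key2 : (1 - z) * ∑' j : ℕ, cjj a q j * (z * q ^ j / (1 - z * q ^ j))
      = (∑' j : ℕ, h j) + z * ∑' j : ℕ, cjj a q j := by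
    rw [← tsum_mul_left (a := 1 - z)]
    have hpt : ∀ j : ℕ, (1 - z) * (cjj a q j * (z * q ^ j / (1 - z * q ^ j)))
        = h j + z * cjj a q j := by
      intro j
      have hd := one_sub_ne z hz j
      rw [hh]
      field_simp
      ring
    rw [tsum_congr hpt, Summable.tsum_add hsum_h (hsum_c.mul_left z), tsum_mul_left]
  -- Key1
  have Key1 : (1 - a*z) * ∑' j : ℕ, cjj a q j * ((q*z) * q ^ j / (1 - (q*z) * q ^ j))
      = (∑' j : ℕ, h j) + (a*z) * ∑' j : ℕ, cjj a q j := by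
    have hpt0 : ∀ j : ℕ, cjj a q j * ((q*z) * q ^ j / (1 - (q*z) * q ^ j))
        = cjj a q j * (z * q ^ (j+1) / (1 - z * q ^ (j+1))) := by
      intro j; rw [hshift j]
    rw [tsum_congr hpt0, ← tsum_mul_left (a := 1 - a*z)]
    have hpt : ∀ j : ℕ, (1 - a*z) * (cjj a q j * (z * q ^ (j+1) / (1 - z * q ^ (j+1))))
        = h (j+1) + (a*z) * cjj a q j := by
      intro j
      have hd := one_sub_ne z hz (j+1)
      have hu : q ^ (j+1) ≠ 0 := pow_ne_zero _ hq0
      have hrec := cj_rec hr1 hq0 a j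
      rw [hh]
      field_simp
      linear_combination (-z) * hrec
    rw [tsum_congr hpt, Summable.tsum_add ((summable_nat_add_iff 1).mpr hsum_h)
      (hsum_c.mul_left (a*z)), tsum_mul_left]
    congr 1
    have h0 : h 0 = 0 := by
      rw [hh]; simp
    rw [Summable.tsum_eq_zero_add hsum_h, h0, zero_add]
  rw [Gm, Gm]
  linear_combination K * Key2 - K * Key1 + ((1:ℂ) - a) * z * hKS

include hr1 hq0 ha in
lemma iter_G (z : ℂ) (hz : ∀ j : ℕ, z * q ^ j ≠ 1) (N : ℕ) :
    qPF (a*z) q N * Gm a q (q^N * z) = qPF z q N * Gm a q z := by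
  induction N with
  | zero => simp [qPF]
  | succ N ih =>
    have hzN : ∀ j : ℕ, (q^N * z) * q ^ j ≠ 1 := by
      intro j
      have h := hz (N+j)
      intro hcon
      apply h
      rw [← hcon, pow_add]
      ring
    have hfe := FE_G hr1 hq0 ha (q^N * z) hzN
    have harg : q * (q^N * z) = q^(N+1) * z := by rw [pow_succ]; ring
    rw [harg] at hfe
    rw [qPF_succ hr1, qPF_succ hr1]
    linear_combination (-(qPF (a*z) q N)) * hfe + (1 - z*q^N) * ih

include hr1 hq0 ha in
lemma G_cont : ∃ C : ℝ, 0 ≤ C ∧ ∀ w : ℂ, ‖w‖ ≤ 1/10 → ‖Gm a q w - 1‖ ≤ C * ‖w‖ := by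
  set ρ : ℝ := (3+‖a‖)/4 with hρ
  have hρ1 : ρ < 1 := by rw [hρ]; nlinarith
  have hρ0 : (0:ℝ) ≤ ρ := by rw [hρ]; positivity
  have hgeo : (0:ℝ) < (1 - ρ)⁻¹ := by
    rw [inv_pos]; linarith
  refine ⟨‖(1:ℂ) / qPI q q‖ * ((16000 * ‖qPI a q‖ * (10/9)) * (1 - ρ)⁻¹), by positivity, ?_⟩
  intro w hw
  have hb : ∀ j : ℕ, ‖cjj a q j * (w * q ^ j / (1 - w * q ^ j))‖
      ≤ ((16000 * ‖qPI a q‖ * (10/9)) * ‖w‖) * ρ^j := by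
    intro j
    have h1 : ‖w * q ^ j‖ ≤ ‖w‖ := by
      rw [norm_mul, norm_pow]
      have : ‖q‖^j ≤ 1 := pow_le_one₀ (norm_nonneg q) (le_trans hr1 (by norm_num))
      nlinarith [norm_nonneg w, pow_nonneg (norm_nonneg q) j]
    have h2 : (9:ℝ)/10 ≤ ‖1 - w * q ^ j‖ := by
      have h3 := norm_sub_norm_le (1:ℂ) (w * q ^ j)
      rw [norm_one] at h3
      linarith
    have h4 : ‖(1 - w * q ^ j)⁻¹‖ ≤ 10/9 := by
      rw [norm_inv]
      rw [inv_le_comm₀ (by linarith : (0:ℝ) < ‖1 - w * q ^ j‖) (by norm_num : (0:ℝ) < 10/9)]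
      linarith
    rw [norm_mul, div_eq_mul_inv, norm_mul]
    calc ‖cjj a q j‖ * (‖w * q ^ j‖ * ‖(1 - w * q ^ j)⁻¹‖)
        ≤ ((16000 * ‖qPI a q‖) * ρ^j) * (‖w‖ * (10/9)) := by
          apply mul_le_mul (cj_bound hr1 hq0 a ha j)
          · exact mul_le_mul h1 h4 (norm_nonneg _) (norm_nonneg w)
          · positivity
          · positivity
      _ = ((16000 * ‖qPI a q‖ * (10/9)) * ‖w‖) * ρ^j := by ring
  have hs : HasSum (fun j : ℕ => ((16000 * ‖qPI a q‖ * (10/9)) * ‖w‖) * ρ^j)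
      (((16000 * ‖qPI a q‖ * (10/9)) * ‖w‖) * (1 - ρ)⁻¹) :=
    (hasSum_geometric_of_lt_one hρ0 hρ1).mul_left _
  have hG : Gm a q w - 1 = (1 / qPI q q) * ∑' j : ℕ, cjj a q j * (w * q ^ j / (1 - w * q ^ j)) := by
    rw [Gm]; ring
  rw [hG, norm_mul]
  calc ‖(1:ℂ) / qPI q q‖ * ‖∑' j : ℕ, cjj a q j * (w * q ^ j / (1 - w * q ^ j))‖
      ≤ ‖(1:ℂ) / qPI q q‖ * (((16000 * ‖qPI a q‖ * (10/9)) * ‖w‖) * (1 - ρ)⁻¹) := by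
        apply mul_le_mul_of_nonneg_left (tsum_of_norm_bounded hs hb) (norm_nonneg _)
    _ = ‖(1:ℂ) / qPI q q‖ * ((16000 * ‖qPI a q‖ * (10/9)) * (1 - ρ)⁻¹) * ‖w‖ := by ring

include hr1 hq0 ha in
lemma tendsto_Gm_one (z : ℂ) : Tendsto (fun N : ℕ => Gm a q (q^N * z)) atTop (𝓝 1) := by
  obtain ⟨C, hC0, hC⟩ := G_cont hr1 hq0 ha
  have hq1 : ‖q‖ < 1 := lt_of_le_of_lt hr1 (by norm_num)
  have h0 : Tendsto (fun N : ℕ => Gm a q (q^N * z) - 1) atTop (𝓝 0) := by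
    apply squeeze_zero_norm' (a := fun N : ℕ => C * (‖z‖ * ‖q‖^N))
    · have hsm : ∀ᶠ N : ℕ in atTop, ‖q^N * z‖ ≤ 1/10 := by
        filter_upwards [eventually_small hr1 z (1/10) (by norm_num)] with N hN
        rw [mul_comm]; exact hN
      filter_upwards [hsm] with N hN
      calc ‖Gm a q (q^N * z) - 1‖ ≤ C * ‖q^N * z‖ := hC _ hN
        _ = C * (‖z‖ * ‖q‖^N) := by rw [norm_mul, norm_pow]; ring
    · have h2 := ((tendsto_pow_atTop_nhds_zero_of_lt_one (norm_nonneg q) hq1).const_mul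
        (C * ‖z‖))
      simp only [mul_zero] at h2
      apply h2.congr
      intro N; ring
  have := h0.add (tendsto_const_nhds (x := (1:ℂ)))
  simp only [zero_add] at this
  apply this.congr
  intro N; ring

include hr1 hq0 ha in
lemma main_identity (z : ℂ) (hz : ∀ j : ℕ, z * q ^ j ≠ 1) :
    qPI (a*z) q = qPI z q * Gm a q z := by
  have h1 : Tendsto (fun N : ℕ => qPF (a*z) q N * Gm a q (q^N * z)) atTop
      (𝓝 (qPI (a*z) q * 1)) := (tendsto_qPF hr1 (a*z)).mul (tendsto_Gm_one hr1 hq0 ha z)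
  have h2 : Tendsto (fun N : ℕ => qPF (a*z) q N * Gm a q (q^N * z)) atTop
      (𝓝 (qPI z q * Gm a q z)) := by
    have h3 : Tendsto (fun N : ℕ => qPF z q N * Gm a q z) atTop (𝓝 (qPI z q * Gm a q z)) :=
      (tendsto_qPF hr1 z).mul_const _
    exact h3.congr (fun N => (iter_G hr1 hq0 ha z hz N).symm)
  have := tendsto_nhds_unique h1 h2
  rw [← this, mul_one]

end Gpart
end QML

/-- Mittag-Leffler expansion of `(az;q)_∞/(z;q)_∞` for `|a| < 1`, `|q - 1/2| < 1/10`,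
valid at every `z` avoiding the poles `q^{-j}`, the series converging absolutely. -/
theorem qPochhammer_quotient_mittag_leffler
    (a q : ℂ) (ha : ‖a‖ < 1) (hq : ‖q - 1 / 2‖ < 1 / 10)
    (z : ℂ) (hz : ∀ j : ℕ, z * q ^ j ≠ 1) :
    Summable (fun j : ℕ =>
      ‖(qPI (a * q ^ (-(j : ℤ))) q / qPF (q ^ (-(j : ℤ))) q j) *
        (z * q ^ j / (1 - z * q ^ j))‖) ∧
    qPI (a * z) q / qPI z q =
      1 + (1 / qPI q q) *
        ∑' j : ℕ, (qPI (a * q ^ (-(j : ℤ))) q / qPF (q ^ (-(j : ℤ))) q j) *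
          (z * q ^ j / (1 - z * q ^ j)) := by
  have hhalf : ‖(1/2 : ℂ)‖ = 1/2 := by
    rw [show (1/2 : ℂ) = ((1/2 : ℝ) : ℂ) by norm_num, Complex.norm_real]
    norm_num
  have hr1 : ‖q‖ ≤ 3/5 := by
    have h1 : q = (q - 1/2) + 1/2 := by ring
    calc ‖q‖ = ‖(q - 1/2) + 1/2‖ := by rw [← h1]
      _ ≤ ‖q - 1/2‖ + ‖(1/2:ℂ)‖ := norm_add_le _ _
      _ ≤ 3/5 := by rw [hhalf]; linarith
  have hq0 : q ≠ 0 := by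
    intro h0
    rw [h0, zero_sub, norm_neg, hhalf] at hq
    norm_num at hq
  constructor
  · exact QML.summable_main hr1 hq0 ha z hz
  · have hid := QML.main_identity hr1 hq0 ha z hz
    have hne : qPI z q ≠ 0 := QML.qPI_ne_zero hr1 z hz
    rw [div_eq_iff hne, hid, QML.Gm]
    simp only [QML.cjj]
    ring
end
end

section
/- There exist ε₀ > 0 and ε₁ > 0 such that for all real q ∈ (1/2-ε₀, 1/2+ε₀), all real v ∈ (3/2-ε₁, 3/2+ε₁), and every integer j ≥ 0: (i) h_j(t;q,v) = O(1/t) as t → +∞; (ii) if j ≥ 1 then h_j(t;q,v) = O(1) as t → 0⁺; (iii) h_0(t;q,v) = O(t^{-γ}) as t → 0⁺, where γ = log v / log(1/q). -/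
open Filter Asymptotics Topology

noncomputable section

/-- `h_j(t;q,v) = q^{-2} ∑_{ν≥1} (v q^j)^ν / (1 + t q^{-ν-2})` -/
def hfun (q v : ℝ) (j : ℕ) (t : ℝ) : ℝ :=
  (∑' ν : ℕ, (v * q ^ j) ^ (ν + 1) / (1 + t / q ^ (ν + 3))) / q ^ 2

namespace HfunAux

variable {q v w t : ℝ}

lemma term_nonneg (hq : 0 < q) (hw : 0 ≤ w) (ht : 0 < t) (ν : ℕ) :
    0 ≤ w ^ (ν + 1) / (1 + t / q ^ (ν + 3)) := by positivity

lemma term_le_pow (hq : 0 < q) (hw : 0 ≤ w) (ht : 0 < t) (ν : ℕ) :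
    w ^ (ν + 1) / (1 + t / q ^ (ν + 3)) ≤ w ^ (ν + 1) := by
  apply div_le_self (by positivity)
  have h : 0 ≤ t / q ^ (ν + 3) := by positivity
  linarith

lemma term_le_geom (hq : 0 < q) (hw : 0 ≤ w) (hwv : w ≤ v) (ht : 0 < t) (ν : ℕ) :
    w ^ (ν + 1) / (1 + t / q ^ (ν + 3)) ≤ (v * q) ^ (ν + 1) * (q ^ 2 / t) := by
  have hd : 0 < t / q ^ (ν + 3) := by positivity
  have h1 : w ^ (ν + 1) / (1 + t / q ^ (ν + 3)) ≤ w ^ (ν + 1) / (t / q ^ (ν + 3)) :=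
    div_le_div_of_nonneg_left (pow_nonneg hw _) hd (by linarith)
  have h2 : w ^ (ν + 1) / (t / q ^ (ν + 3)) ≤ v ^ (ν + 1) / (t / q ^ (ν + 3)) := by
    gcongr
  have h3 : v ^ (ν + 1) / (t / q ^ (ν + 3)) = (v * q) ^ (ν + 1) * (q ^ 2 / t) := by
    rw [div_div_eq_mul_div, mul_pow]
    ring
  linarith [h1, h2, h3.le, h3.ge]

lemma summable_geom_succ (hv : 0 ≤ v) (hq : 0 ≤ q) (hvq : v * q < 1) :
    Summable (fun ν : ℕ => (v * q) ^ (ν + 1)) := by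
  have := (summable_geometric_of_lt_one (by positivity) hvq).mul_right (v * q)
  simpa [pow_succ] using this

lemma tsum_geom_succ (hr : 0 ≤ v * q) (hvq : v * q < 1) :
    ∑' ν : ℕ, (v * q) ^ (ν + 1) = (v * q) / (1 - v * q) := by
  have h : ∑' ν : ℕ, (v * q) ^ ν * (v * q) = (∑' ν : ℕ, (v * q) ^ ν) * (v * q) :=
    tsum_mul_right
  rw [tsum_geometric_of_lt_one hr hvq] at h
  calc ∑' ν : ℕ, (v * q) ^ (ν + 1) = ∑' ν : ℕ, (v * q) ^ ν * (v * q) := by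
        simp [pow_succ]
    _ = (1 - v * q)⁻¹ * (v * q) := h
    _ = (v * q) / (1 - v * q) := by rw [div_eq_mul_inv, mul_comm]

lemma summable_term (hq : 0 < q) (hw : 0 ≤ w) (hwv : w ≤ v) (hvq : v * q < 1)
    (ht : 0 < t) :
    Summable (fun ν : ℕ => w ^ (ν + 1) / (1 + t / q ^ (ν + 3))) := by
  have hv : 0 ≤ v := le_trans hw hwv
  exact Summable.of_nonneg_of_le (term_nonneg hq hw ht) (term_le_geom hq hw hwv ht)
    ((summable_geom_succ hv hq.le hvq).mul_right _)

lemma tsum_term_le_div_t (hq : 0 < q) (hw : 0 ≤ w) (hwv : w ≤ v) (hvq : v * q < 1)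
    (ht : 0 < t) :
    (∑' ν : ℕ, w ^ (ν + 1) / (1 + t / q ^ (ν + 3)))
      ≤ (v * q / (1 - v * q)) * (q ^ 2 / t) := by
  have hv : 0 ≤ v := le_trans hw hwv
  have h1 : (∑' ν : ℕ, w ^ (ν + 1) / (1 + t / q ^ (ν + 3)))
      ≤ ∑' ν : ℕ, (v * q) ^ (ν + 1) * (q ^ 2 / t) :=
    Summable.tsum_le_tsum (term_le_geom hq hw hwv ht) (summable_term hq hw hwv hvq ht)
      ((summable_geom_succ hv hq.le hvq).mul_right _)
  have h2 : ∑' ν : ℕ, (v * q) ^ (ν + 1) * (q ^ 2 / t)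
      = (v * q / (1 - v * q)) * (q ^ 2 / t) := by
    rw [tsum_mul_right, tsum_geom_succ (by positivity) hvq]
  linarith [h2.le, h2.ge]

lemma tsum_term_le_const (hq : 0 < q) (hq1 : q ≤ 1) (hv : 0 ≤ v) (hw : 0 ≤ w)
    (hwvq : w ≤ v * q) (hvq : v * q < 1) (ht : 0 < t) :
    (∑' ν : ℕ, w ^ (ν + 1) / (1 + t / q ^ (ν + 3))) ≤ v * q / (1 - v * q) := by
  have hvq0 : 0 ≤ v * q := le_trans hw hwvq
  have hle : ∀ ν : ℕ, w ^ (ν + 1) / (1 + t / q ^ (ν + 3)) ≤ (v * q) ^ (ν + 1) := by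
    intro ν
    calc w ^ (ν + 1) / (1 + t / q ^ (ν + 3)) ≤ w ^ (ν + 1) := term_le_pow hq hw ht ν
      _ ≤ (v * q) ^ (ν + 1) := pow_le_pow_left₀ hw hwvq _
  have hvq' : v * q ≤ v := by nlinarith
  have h1 : (∑' ν : ℕ, w ^ (ν + 1) / (1 + t / q ^ (ν + 3)))
      ≤ ∑' ν : ℕ, (v * q) ^ (ν + 1) :=
    Summable.tsum_le_tsum hle (summable_term hq hw (le_trans hwvq hvq') hvq ht)
      (summable_geom_succ hv hq.le hvq)
  rw [tsum_geom_succ hvq0 hvq] at h1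
  exact h1

/-- The key estimate for `j = 0` near `t = 0`. -/
lemma tsum_zero_le (hq0 : 0 < q) (hq1 : q < 1) (hv1 : 1 < v) (hvq : v * q < 1)
    (ht : 0 < t) (ht1 : t < 1) :
    (∑' ν : ℕ, v ^ (ν + 1) / (1 + t / q ^ (ν + 3)))
      ≤ (v / (v - 1) + v * q ^ 2 / (1 - v * q))
          * t ^ (-(Real.log v / Real.log (1 / q))) := by
  set f : ℕ → ℝ := fun ν => v ^ (ν + 1) / (1 + t / q ^ (ν + 3)) with hf
  have hv0 : (0 : ℝ) < v := lt_trans one_pos hv1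
  have h1vq : (0 : ℝ) < 1 - v * q := by linarith
  have hlogq : Real.log q < 0 := Real.log_neg hq0 hq1
  have hlogt : Real.log t < 0 := Real.log_neg ht ht1
  set x : ℝ := Real.log t / Real.log q with hxdef
  have hx0 : 0 < x := div_pos_of_neg_of_neg hlogt hlogq
  set N : ℕ := ⌊x⌋₊ with hN
  have hN1 : (N : ℝ) ≤ x := Nat.floor_le hx0.le
  have hN2 : x < N + 1 := Nat.lt_floor_add_one x
  have hqx : q ^ x = t := by
    rw [Real.rpow_def_of_pos hq0, hxdef, mul_comm, div_mul_cancel₀ _ hlogq.ne,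
      Real.exp_log ht]
  have htq : t ≤ q ^ N := by
    have h := Real.rpow_le_rpow_of_exponent_ge hq0 hq1.le hN1
    rwa [hqx, Real.rpow_natCast] at h
  have hqt : q ^ (N + 1) ≤ t := by
    have h := Real.rpow_le_rpow_of_exponent_ge hq0 hq1.le hN2.le
    rw [hqx] at h
    rwa [show ((N : ℝ) + 1) = ((N + 1 : ℕ) : ℝ) by push_cast; ring,
      Real.rpow_natCast] at h
  have hvN : v ^ N ≤ t ^ (-(Real.log v / Real.log (1 / q))) := by
    have h1 : t ^ (-(Real.log v / Real.log (1 / q))) = v ^ x := by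
      rw [one_div, Real.log_inv, Real.rpow_def_of_pos ht, Real.rpow_def_of_pos hv0,
        hxdef, div_neg, neg_neg]
      congr 1
      ring
    rw [h1, ← Real.rpow_natCast v N]
    exact Real.rpow_le_rpow_of_exponent_le hv1.le hN1
  have hsum : Summable f := summable_term hq0 hv0.le le_rfl hvq ht
  have hsplit : (∑' ν : ℕ, f ν) = (∑ i ∈ Finset.range N, f i) + ∑' i : ℕ, f (i + N) :=
    (hsum.sum_add_tsum_nat_add N).symm
  -- head estimate
  have hhead : (∑ i ∈ Finset.range N, f i) ≤ v ^ N * (v / (v - 1)) := by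
    have h1 : (∑ i ∈ Finset.range N, f i) ≤ ∑ i ∈ Finset.range N, v ^ (i + 1) :=
      Finset.sum_le_sum fun i _ => term_le_pow hq0 hv0.le ht i
    have h2 : (∑ i ∈ Finset.range N, v ^ (i + 1))
        = v * ((v ^ N - 1) / (v - 1)) := by
      rw [← geom_sum_eq hv1.ne' N, Finset.mul_sum]
      exact Finset.sum_congr rfl fun i _ => by ring
    have hvm : (0:ℝ) < v - 1 := by linarith
    have h3 : v * ((v ^ N - 1) / (v - 1)) ≤ v ^ N * (v / (v - 1)) := by
      have e1 : v * ((v ^ N - 1) / (v - 1)) = v * (v ^ N - 1) / (v - 1) := by ring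
      have e2 : v ^ N * (v / (v - 1)) = v ^ N * v / (v - 1) := by ring
      rw [e1, e2]
      have hnum : v * (v ^ N - 1) ≤ v ^ N * v := by nlinarith
      exact div_le_div_of_nonneg_right hnum hvm.le
    linarith [h1, h2.le]
  -- tail estimate
  have htail : (∑' i : ℕ, f (i + N)) ≤ v ^ N * (v * q ^ 2 / (1 - v * q)) := by
    have hmaj : ∀ i : ℕ, f (i + N) ≤ ((v * q) ^ (N + 1) * (q ^ 2 / t)) * (v * q) ^ i := by
      intro i
      have h := term_le_geom (w := v) hq0 hv0.le le_rfl ht (i + N)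
      have heq : (v * q) ^ (i + N + 1) * (q ^ 2 / t)
          = ((v * q) ^ (N + 1) * (q ^ 2 / t)) * (v * q) ^ i := by ring
      rw [heq] at h
      exact h
    have hsummaj : Summable (fun i : ℕ => ((v * q) ^ (N + 1) * (q ^ 2 / t)) * (v * q) ^ i) :=
      (summable_geometric_of_lt_one (by positivity) hvq).mul_left _
    have hsumtail : Summable (fun i : ℕ => f (i + N)) := (summable_nat_add_iff N).mpr hsum
    have h1 : (∑' i : ℕ, f (i + N))
        ≤ ∑' i : ℕ, ((v * q) ^ (N + 1) * (q ^ 2 / t)) * (v * q) ^ i :=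
      Summable.tsum_le_tsum hmaj hsumtail hsummaj
    have h2 : (∑' i : ℕ, ((v * q) ^ (N + 1) * (q ^ 2 / t)) * (v * q) ^ i)
        = ((v * q) ^ (N + 1) * (q ^ 2 / t)) * (1 - v * q)⁻¹ := by
      rw [tsum_mul_left, tsum_geometric_of_lt_one (by positivity) hvq]
    have hq1N : q ^ (N + 1) / t ≤ 1 := (div_le_one ht).2 hqt
    have heq : ((v * q) ^ (N + 1) * (q ^ 2 / t)) * (1 - v * q)⁻¹
        = (v ^ N * (v * q ^ 2 / (1 - v * q))) * (q ^ (N + 1) / t) := by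
      rw [mul_pow]
      field_simp
      ring
    have hpos : 0 ≤ v ^ N * (v * q ^ 2 / (1 - v * q)) := by
      apply mul_nonneg (by positivity)
      exact div_nonneg (by positivity) h1vq.le
    have h3 : ((v * q) ^ (N + 1) * (q ^ 2 / t)) * (1 - v * q)⁻¹
        ≤ v ^ N * (v * q ^ 2 / (1 - v * q)) := by
      rw [heq]
      exact mul_le_of_le_one_right hpos hq1N
    linarith [h1, h2.le]
  have hKpos : 0 ≤ v / (v - 1) + v * q ^ 2 / (1 - v * q) := by
    have h1 : (0:ℝ) ≤ v / (v - 1) := div_nonneg hv0.le (by linarith)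
    have h2 : (0:ℝ) ≤ v * q ^ 2 / (1 - v * q) :=
      div_nonneg (by positivity) h1vq.le
    linarith
  calc (∑' ν : ℕ, f ν) = (∑ i ∈ Finset.range N, f i) + ∑' i : ℕ, f (i + N) := hsplit
    _ ≤ v ^ N * (v / (v - 1)) + v ^ N * (v * q ^ 2 / (1 - v * q)) := add_le_add hhead htail
    _ = (v / (v - 1) + v * q ^ 2 / (1 - v * q)) * v ^ N := by ring
    _ ≤ (v / (v - 1) + v * q ^ 2 / (1 - v * q))
          * t ^ (-(Real.log v / Real.log (1 / q))) :=
      mul_le_mul_of_nonneg_left hvN hKpos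

end HfunAux

open HfunAux

/-- For `q` near `1/2` and `v` near `3/2`: `h_j(t) = O(1/t)` as `t → ∞`;
`h_j(t) = O(1)` as `t → 0⁺` for `j ≥ 1`; and `h_0(t) = O(t^{-γ})` as `t → 0⁺`,
where `γ = log v / log(1/q)`. -/
theorem hfun_asymptotic_bounds :
    ∃ ε₀ : ℝ, 0 < ε₀ ∧ ∃ ε₁ : ℝ, 0 < ε₁ ∧
      ∀ q v : ℝ, |q - 1 / 2| < ε₀ → |v - 3 / 2| < ε₁ →
        (∀ j : ℕ, (fun t => hfun q v j t) =O[atTop] (fun t => 1 / t)) ∧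
        (∀ j : ℕ, 1 ≤ j →
          (fun t => hfun q v j t) =O[𝓝[>] (0 : ℝ)] (fun _ => (1 : ℝ))) ∧
        (fun t => hfun q v 0 t) =O[𝓝[>] (0 : ℝ)]
          (fun t => t ^ (-(Real.log v / Real.log (1 / q)))) := by
  refine ⟨1/100, by norm_num, 1/100, by norm_num, fun q v hq hv => ?_⟩
  rw [abs_lt] at hq hv
  obtain ⟨hq', hq''⟩ := hq
  obtain ⟨hv', hv''⟩ := hv
  have hq0 : 0 < q := by linarith
  have hq1 : q < 1 := by linarith
  have hv1 : 1 < v := by linarith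
  have hv0 : 0 < v := by linarith
  have hvq : v * q < 1 := by nlinarith
  have h1vq : (0:ℝ) < 1 - v * q := by linarith
  have hfun_nonneg : ∀ (j : ℕ) (t : ℝ), 0 < t → 0 ≤ hfun q v j t := by
    intro j t ht
    unfold hfun
    apply div_nonneg _ (sq_nonneg q)
    exact tsum_nonneg (term_nonneg hq0 (by positivity) ht)
  refine ⟨?_, ?_, ?_⟩
  · -- part (i): O(1/t) at atTop
    intro j
    rw [isBigO_iff]
    refine ⟨v * q / (1 - v * q), ?_⟩
    filter_upwards [eventually_gt_atTop 0] with t ht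
    have hwv : v * q ^ j ≤ v := by
      have : q ^ j ≤ 1 := pow_le_one₀ hq0.le hq1.le
      nlinarith
    have hb := tsum_term_le_div_t (w := v * q ^ j) hq0 (by positivity) hwv hvq ht
    have hbound : hfun q v j t ≤ (v * q / (1 - v * q)) * (1 / t) := by
      unfold hfun
      rw [div_le_iff₀ (by positivity : (0:ℝ) < q ^ 2)]
      calc (∑' ν : ℕ, (v * q ^ j) ^ (ν + 1) / (1 + t / q ^ (ν + 3)))
          ≤ (v * q / (1 - v * q)) * (q ^ 2 / t) := hb
        _ = (v * q / (1 - v * q)) * (1 / t) * q ^ 2 := by ring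
    rw [Real.norm_eq_abs, Real.norm_eq_abs, abs_of_nonneg (hfun_nonneg j t ht),
      abs_of_nonneg (by positivity : (0:ℝ) ≤ 1 / t)]
    exact hbound
  · -- part (ii): O(1) at 0⁺ for j ≥ 1
    intro j hj
    rw [isBigO_iff]
    refine ⟨(v * q / (1 - v * q)) / q ^ 2, ?_⟩
    filter_upwards [self_mem_nhdsWithin] with t ht
    have ht : 0 < t := ht
    have hwvq : v * q ^ j ≤ v * q := by
      have : q ^ j ≤ q := by
        calc q ^ j ≤ q ^ 1 := pow_le_pow_of_le_one hq0.le hq1.le hj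
          _ = q := pow_one q
      nlinarith
    have hb := tsum_term_le_const (w := v * q ^ j) hq0 hq1.le hv0.le (by positivity) hwvq hvq ht
    have hbound : hfun q v j t ≤ (v * q / (1 - v * q)) / q ^ 2 := by
      unfold hfun
      gcongr
    rw [Real.norm_eq_abs, Real.norm_eq_abs, abs_of_nonneg (hfun_nonneg j t ht)]
    simpa using hbound
  · -- part (iii): O(t^{-γ}) at 0⁺
    rw [isBigO_iff]
    refine ⟨(v / (v - 1) + v * q ^ 2 / (1 - v * q)) / q ^ 2, ?_⟩
    filter_upwards [Ioo_mem_nhdsGT_of_mem (show (0:ℝ) ∈ Set.Ico (0:ℝ) 1 by norm_num)]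
      with t ht
    obtain ⟨ht0, ht1⟩ := ht
    have hb := tsum_zero_le hq0 hq1 hv1 hvq ht0 ht1
    have heq : hfun q v 0 t = (∑' ν : ℕ, v ^ (ν + 1) / (1 + t / q ^ (ν + 3))) / q ^ 2 := by
      unfold hfun
      simp
    have hrpow_nonneg : 0 ≤ t ^ (-(Real.log v / Real.log (1 / q))) :=
      Real.rpow_nonneg ht0.le _
    have hbound : hfun q v 0 t
        ≤ (v / (v - 1) + v * q ^ 2 / (1 - v * q)) / q ^ 2
          * t ^ (-(Real.log v / Real.log (1 / q))) := by
      rw [heq, div_le_iff₀ (by positivity : (0:ℝ) < q ^ 2)]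
      calc (∑' ν : ℕ, v ^ (ν + 1) / (1 + t / q ^ (ν + 3)))
          ≤ (v / (v - 1) + v * q ^ 2 / (1 - v * q))
              * t ^ (-(Real.log v / Real.log (1 / q))) := hb
        _ = (v / (v - 1) + v * q ^ 2 / (1 - v * q)) / q ^ 2
              * t ^ (-(Real.log v / Real.log (1 / q))) * q ^ 2 := by
          field_simp
    rw [Real.norm_eq_abs, Real.norm_eq_abs, abs_of_nonneg (hfun_nonneg 0 t ht0),
      abs_of_nonneg hrpow_nonneg]
    exact hbound
end
end
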